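/- arXiv:2104.12019 — 3 statements merged into one kernel-verified Lean document; each statement's English description precedes it below -/
import Mathlib

section
/- For every integer k with 1 ≤ k < log n, the probability that a uniformly random σ ∈ S_n has exactly k cycles satisfies P( C(σ) = k ) ≥ ( H_n^{k−1} / (n·(k−1)!) ) · ( 1 − (k−1)/log n ). -/
open Finset

/-- The number of cycles of length `j` in the permutation `σ` of `{1,…,n}`
(fixed points count as cycles of length 1): the number of points whose
orbit under `σ` has size `j`, divided by `j`. -/
noncomputable def cycleCount {n : ℕ} (σ : Equiv.Perm (Fin n)) (j : ℕ) : ℕ :=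
  (Finset.univ.filter fun x => Function.minimalPeriod (⇑σ) x = j).card / j

/-- The number of cycles of `σ` whose length lies in the set `I`. -/
noncomputable def cycleCountIn {n : ℕ} (σ : Equiv.Perm (Fin n)) (I : Finset ℕ) : ℕ :=
  ∑ j ∈ I, cycleCount σ j

/-- The total number of cycles of `σ` (fixed points included as 1-cycles). -/
noncomputable def totalCycles {n : ℕ} (σ : Equiv.Perm (Fin n)) : ℕ :=
  cycleCountIn σ (Finset.Icc 1 n)

/-- Probability of an event under a uniformly random permutation of `{1,…,n}`. -/
noncomputable def permP (n : ℕ) (E : Equiv.Perm (Fin n) → Prop) : ℝ :=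
  (Nat.card {σ : Equiv.Perm (Fin n) // E σ} : ℝ) / n.factorial

/-- Expectation of `f` under a uniformly random permutation of `{1,…,n}`. -/
noncomputable def permE (n : ℕ) (f : Equiv.Perm (Fin n) → ℝ) : ℝ :=
  (∑ σ : Equiv.Perm (Fin n), f σ) / n.factorial

/-- `H(I) = ∑_{j ∈ I} 1/j`. -/
noncomputable def Hset (I : Finset ℕ) : ℝ := ∑ j ∈ I, (1 : ℝ) / j

/-- The harmonic sum `H_n = ∑_{i=1}^n 1/i`. -/
noncomputable def harm (n : ℕ) : ℝ := Hset (Finset.Icc 1 n)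


-- ### Auxiliary development ###

open Finset Equiv

variable {α : Type*} [Fintype α] [DecidableEq α]

/-- The cycle (orbit) of `x` under `σ`, as a `Finset`. -/
def pcls (σ : Perm α) (x : α) : Finset α := univ.filter (σ.SameCycle x)

/-- The set of cycles (orbits) of `σ`. -/
def porbs (σ : Perm α) : Finset (Finset α) := univ.image (pcls σ)

/-- The number of cycles (orbits) of `σ`. -/
def pnc (σ : Perm α) : ℕ := (porbs σ).card

lemma mem_pcls {σ : Perm α} {x y : α} : y ∈ pcls σ x ↔ σ.SameCycle x y := by
  simp [pcls]

lemma self_mem_pcls (σ : Perm α) (x : α) : x ∈ pcls σ x := mem_pcls.2 (Equiv.Perm.SameCycle.refl σ x)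

lemma pcls_eq_of_sameCycle {σ : Perm α} {x y : α} (h : σ.SameCycle x y) :
    pcls σ x = pcls σ y := by
  ext z; simp only [mem_pcls]
  exact ⟨fun hz => h.symm.trans hz, fun hz => h.trans hz⟩

lemma pcls_eq_of_mem {σ : Perm α} {x y : α} (h : y ∈ pcls σ x) : pcls σ x = pcls σ y :=
  pcls_eq_of_sameCycle (mem_pcls.1 h)

lemma pcls_mem_porbs (σ : Perm α) (x : α) : pcls σ x ∈ porbs σ :=
  Finset.mem_image_of_mem _ (mem_univ x)

lemma coe_pcls (σ : Perm α) (x : α) :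
    (pcls σ x : Set α) = MulAction.orbit (Subgroup.zpowers σ) x := by
  ext y
  simp only [Finset.coe_filter, pcls, Set.mem_setOf_eq, mem_univ, true_and,
    MulAction.mem_orbit_iff]
  constructor
  · rintro ⟨i, hi⟩
    exact ⟨⟨σ ^ i, Subgroup.mem_zpowers_iff.2 ⟨i, rfl⟩⟩, hi⟩
  · rintro ⟨⟨g, hg⟩, hgy⟩
    obtain ⟨i, rfl⟩ := Subgroup.mem_zpowers_iff.1 hg
    exact ⟨i, hgy⟩

lemma card_pcls (σ : Perm α) (x : α) :
    (pcls σ x).card = Function.minimalPeriod (⇑σ) x := by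
  classical
  haveI : Fintype (MulAction.orbit (Subgroup.zpowers σ) x) := by
    rw [← coe_pcls]; exact FinsetCoe.fintype _
  have h1 : Function.minimalPeriod (fun y => σ • y) x
      = Fintype.card (MulAction.orbit (Subgroup.zpowers σ) x) :=
    MulAction.minimalPeriod_eq_card σ x
  have h2 : (⇑σ) = (fun y => σ • y) := rfl
  rw [h2, h1]
  rw [← Set.ncard_coe_finset, coe_pcls, Set.ncard_eq_toFinset_card', Set.toFinset_card]

lemma one_le_card_pcls (σ : Perm α) (x : α) : 1 ≤ (pcls σ x).card :=
  Finset.card_pos.2 ⟨x, self_mem_pcls σ x⟩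

lemma card_pcls_le (σ : Perm α) (x : α) : (pcls σ x).card ≤ Fintype.card α := by
  simpa using Finset.card_le_card (Finset.subset_univ (pcls σ x))

lemma cycleCount_eq {n : ℕ} (σ : Perm (Fin n)) (j : ℕ) (hj : 1 ≤ j) :
    cycleCount σ j = ((porbs σ).filter (fun ω => ω.card = j)).card := by
  classical
  have key : (Finset.univ.filter fun x => Function.minimalPeriod (⇑σ) x = j).card
      = j * ((porbs σ).filter (fun ω => ω.card = j)).card := by
    rw [Finset.card_eq_sum_card_fiberwise
      (f := pcls σ) (t := porbs σ) (fun x _ => pcls_mem_porbs σ x)]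
    have step : ∀ ω ∈ porbs σ,
        ((Finset.univ.filter fun x => Function.minimalPeriod (⇑σ) x = j).filter
          (fun x => pcls σ x = ω)).card = if ω.card = j then j else 0 := by
      intro ω hω
      obtain ⟨z, -, rfl⟩ := Finset.mem_image.1 hω
      by_cases hcard : (pcls σ z).card = j
      · rw [if_pos hcard]
        have : ((Finset.univ.filter fun x => Function.minimalPeriod (⇑σ) x = j).filter
            (fun x => pcls σ x = pcls σ z)) = pcls σ z := by
          ext y
          simp only [Finset.mem_filter, Finset.mem_univ, true_and]
          constructor
          · rintro ⟨-, h2⟩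
            rw [← h2]; exact self_mem_pcls σ y
          · intro hy
            have hcls : pcls σ y = pcls σ z := (pcls_eq_of_mem hy).symm
            refine ⟨?_, hcls⟩
            rw [← card_pcls, hcls, hcard]
        rw [this, hcard]
      · rw [if_neg hcard]
        rw [Finset.card_eq_zero, Finset.filter_filter, Finset.filter_eq_empty_iff]
        rintro y -
        rintro ⟨h1, h2⟩
        apply hcard
        rw [← h2, card_pcls, h1]
    rw [Finset.sum_congr rfl step, ← Finset.sum_filter, Finset.sum_const, smul_eq_mul, mul_comm]
  rw [cycleCount, key, Nat.mul_div_cancel_left _ hj]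

lemma totalCycles_eq {n : ℕ} (σ : Perm (Fin n)) : totalCycles σ = pnc σ := by
  classical
  rw [totalCycles, cycleCountIn]
  rw [Finset.sum_congr rfl (fun j hj => cycleCount_eq σ j (Finset.mem_Icc.1 hj).1)]
  rw [pnc, Finset.card_eq_sum_card_fiberwise
    (f := Finset.card) (t := Finset.Icc 1 n) ?mem]
  case mem =>
    intro ω hω
    obtain ⟨z, -, rfl⟩ := Finset.mem_image.1 hω
    rw [Finset.mem_coe, Finset.mem_Icc]
    exact ⟨one_le_card_pcls σ z, by simpa using card_pcls_le σ z⟩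


lemma sameCycle_of_pow {σ : Perm α} {x y : α} (i : ℕ) (h : (σ ^ i) x = y) :
    σ.SameCycle x y := ⟨(i : ℤ), by rw [zpow_natCast]; exact h⟩

/-- Transport of `SameCycle` along a map `g` compatible with single steps. -/
lemma sameCycle_map {σ τ : Perm α} (g : α → α)
    (hstep : ∀ z, τ.SameCycle (g z) (g (σ z))) {x y : α}
    (h : σ.SameCycle x y) : τ.SameCycle (g x) (g y) := by
  obtain ⟨i, -, rfl⟩ := h.exists_pow_eq'
  clear h
  induction i with
  | zero => simpa using Equiv.Perm.SameCycle.refl τ (g x)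
  | succ i ih =>
    have : (σ ^ (i+1)) x = σ ((σ ^ i) x) := by
      rw [pow_succ']; rfl
    rw [this]
    exact ih.trans (hstep _)

lemma sameCycle_mono {σ τ : Perm α} (hstep : ∀ z, τ.SameCycle z (σ z)) {x y : α}
    (h : σ.SameCycle x y) : τ.SameCycle x y :=
  sameCycle_map (g := id) (fun z => hstep z) h

lemma pcls_of_fixed {σ : Perm α} {a : α} (ha : σ a = a) : pcls σ a = {a} := by
  ext y
  simp only [mem_pcls, Finset.mem_singleton]
  constructor
  · rintro ⟨i, rfl⟩
    have hfix : Function.IsFixedPt (⇑σ) a := ha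
    exact hfix.perm_zpow i
  · rintro rfl; exact Equiv.Perm.SameCycle.refl σ y

/-- Merging lemma: multiplying by a transposition that joins a fixed point `a`
to the cycle of `p` decreases the number of cycles by one. -/
lemma pnc_swap_mul {a p : α} (hap : a ≠ p) (π : Perm α) (hπ : π a = a) :
    pnc π = pnc (Equiv.swap a p * π) + 1 := by
  classical
  set σ : Perm α := Equiv.swap a p * π with hσ
  have hσa : σ a = p := by simp [hσ, hπ]
  -- single step lemmas
  have hstep1 : ∀ z, σ.SameCycle z (π z) := by
    intro z
    by_cases h1 : π z = a
    · have hz : z = a := by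
        apply π.injective; rw [h1, hπ]
      rw [h1, hz]
    · by_cases h2 : π z = p
      · refine sameCycle_of_pow 2 ?_
        have hσz : σ z = a := by simp [hσ, h2]
        have : (σ ^ 2) z = σ (σ z) := by rw [pow_succ']; rfl
        rw [this, hσz, hσa, h2]
      · refine sameCycle_of_pow 1 ?_
        simp [hσ, Equiv.swap_apply_of_ne_of_ne h1 h2]
  set g : α → α := fun z => if z = a then p else z with hg
  have hstep2 : ∀ z, π.SameCycle (g z) (g (σ z)) := by
    intro z
    by_cases hz : z = a
    · subst hz
      rw [hσa]
      have e1 : g z = p := by simp [hg]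
      have e2 : g p = p := by simp [hg, hap.symm]
      rw [e1, e2]
    · have h1 : π z ≠ a := fun h => hz (π.injective (by rw [h, hπ]))
      by_cases h2 : π z = p
      · have hσz : σ z = a := by simp [hσ, h2]
        rw [hσz]
        have : g z = z := by simp [hg, hz]
        rw [this]
        simp only [hg, if_pos rfl]
        rw [← h2]
        exact sameCycle_of_pow 1 (by simp)
      · have hσz : σ z = π z := by simp [hσ, Equiv.swap_apply_of_ne_of_ne h1 h2]
        rw [hσz]
        have e1 : g z = z := by simp [hg, hz]
        have e2 : g (π z) = π z := by simp [hg, h1]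
        rw [e1, e2]
        exact sameCycle_of_pow 1 (by simp)
  have h1 : ∀ x y : α, π.SameCycle x y → σ.SameCycle x y := fun x y h =>
    sameCycle_mono hstep1 h
  have h2 : ∀ x y : α, σ.SameCycle x y → π.SameCycle (g x) (g y) := fun x y h =>
    sameCycle_map g hstep2 h
  have h3 : σ.SameCycle a p := sameCycle_of_pow 1 (by simpa using hσa)
  set M : Finset α := pcls σ a with hMdef
  have haM : a ∈ M := self_mem_pcls σ a
  have hM : M = insert a (pcls π p) := by
    ext y
    simp only [hMdef, mem_pcls, Finset.mem_insert]
    constructor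
    · intro h
      by_cases hy : y = a
      · exact Or.inl hy
      · right
        have := h2 a y h
        simp only [hg, if_pos rfl, if_neg hy] at this
        rw [← mem_pcls] at this ⊢
        exact this
    · rintro (rfl | h)
      · exact Equiv.Perm.SameCycle.refl σ y
      · exact h3.trans (h1 _ _ h)
  have hpM : pcls π p ⊆ M := by rw [hM]; exact Finset.subset_insert _ _
  have hOut : ∀ x : α, x ∉ M → pcls σ x = pcls π x := by
    intro x hx
    have hxa : x ≠ a := fun h => hx (h ▸ haM)
    ext y
    simp only [mem_pcls]
    constructor
    · intro h
      have hya : y ≠ a := by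
        rintro rfl
        exact hx (mem_pcls.2 h.symm)
      have := h2 x y h
      simpa [hg, if_neg hxa, if_neg hya] using this
    · exact h1 x y
  -- decomposition of the orbit sets
  set S : Finset (Finset α) := (univ \ M).image (pcls π) with hS
  have horbσ : porbs σ = insert M S := by
    rw [porbs, ← Finset.union_sdiff_of_subset (Finset.subset_univ M), Finset.image_union]
    have e1 : M.image (pcls σ) = {M} := by
      rw [show M.image (pcls σ) = M.image (fun _ => M) from Finset.image_congr ?_,
        Finset.image_const ⟨a, haM⟩]
      intro x hx
      exact (pcls_eq_of_mem hx).symm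
    have e2 : (univ \ M).image (pcls σ) = S := by
      rw [hS]
      exact Finset.image_congr (fun x hx => hOut x (Finset.mem_sdiff.1 hx).2)
    rw [e1, e2, ← Finset.insert_eq]
  have horbπ : porbs π = insert {a} (insert (pcls π p) S) := by
    rw [porbs, ← Finset.union_sdiff_of_subset (Finset.subset_univ M), Finset.image_union]
    have e1 : M.image (pcls π) = insert {a} {pcls π p} := by
      rw [hM, Finset.image_insert]
      congr 1
      · exact pcls_of_fixed hπ
      · rw [show (pcls π p).image (pcls π) = (pcls π p).image (fun _ => pcls π p) from
          Finset.image_congr (fun x hx => (pcls_eq_of_mem hx).symm),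
          Finset.image_const ⟨p, self_mem_pcls π p⟩]
    rw [e1, Finset.insert_union, ← Finset.insert_eq]
  have hMS : M ∉ S := by
    intro hMS'
    obtain ⟨x, hx, hxe⟩ := Finset.mem_image.1 hMS'
    have hxM := (Finset.mem_sdiff.1 hx).2
    apply hxM
    rw [← hOut x hxM] at hxe
    exact hxe ▸ self_mem_pcls σ x
  have haS : ({a} : Finset α) ∉ S := by
    intro h
    obtain ⟨x, hx, hxe⟩ := Finset.mem_image.1 h
    have hxM := (Finset.mem_sdiff.1 hx).2
    have hxa : x ∈ ({a} : Finset α) := hxe ▸ self_mem_pcls π x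
    rw [Finset.mem_singleton] at hxa
    exact hxM (hxa ▸ haM)
  have hpS : pcls π p ∉ S := by
    intro h
    obtain ⟨x, hx, hxe⟩ := Finset.mem_image.1 h
    have hxM := (Finset.mem_sdiff.1 hx).2
    exact hxM (hpM (hxe ▸ self_mem_pcls π x))
  have hap2 : ({a} : Finset α) ≠ pcls π p := by
    intro h
    have : p ∈ ({a} : Finset α) := h ▸ self_mem_pcls π p
    exact hap (Finset.mem_singleton.1 this).symm
  rw [pnc, pnc, horbσ, horbπ]
  rw [Finset.card_insert_of_notMem hMS,
      Finset.card_insert_of_notMem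
        (by simp only [Finset.mem_insert, not_or]; exact ⟨hap2, haS⟩),
      Finset.card_insert_of_notMem hpS]

lemma pnc_pos [Nonempty α] (σ : Perm α) : 1 ≤ pnc σ := by
  refine Finset.card_pos.2 ⟨pcls σ (Classical.arbitrary α), pcls_mem_porbs σ _⟩

section FinStuff
variable {n : ℕ}

lemma decomposeFin_zero_succ (e : Perm (Fin n)) (x : Fin n) :
    Equiv.Perm.decomposeFin.symm (0, e) x.succ = (e x).succ := by
  rw [Equiv.Perm.decomposeFin_symm_apply_succ, Equiv.swap_self]
  rfl

lemma decomposeFin_pow (e : Perm (Fin n)) (i : ℕ) (x : Fin n) :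
    ((Equiv.Perm.decomposeFin.symm (0, e) : Perm (Fin (n+1))) ^ i) x.succ = ((e ^ i) x).succ := by
  induction i with
  | zero => simp
  | succ i ih =>
    rw [pow_succ', pow_succ']
    have : (Equiv.Perm.decomposeFin.symm (0, e) * Equiv.Perm.decomposeFin.symm (0, e) ^ i) x.succ
        = Equiv.Perm.decomposeFin.symm (0, e) (((e ^ i) x).succ) := by
      rw [Equiv.Perm.mul_apply, ih]
    rw [this, decomposeFin_zero_succ]
    rfl

lemma pcls_decomposeFin_zero (e : Perm (Fin n)) :
    pcls (Equiv.Perm.decomposeFin.symm (0, e)) (0 : Fin (n+1)) = {0} :=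
  pcls_of_fixed (Equiv.Perm.decomposeFin_symm_apply_zero 0 e)

lemma pcls_decomposeFin_succ (e : Perm (Fin n)) (x : Fin n) :
    pcls (Equiv.Perm.decomposeFin.symm (0, e)) x.succ
      = (pcls e x).map (Fin.succEmb n) := by
  ext y
  simp only [mem_pcls, Finset.mem_map]
  constructor
  · intro h
    obtain ⟨i, -, rfl⟩ := h.exists_pow_eq'
    exact ⟨(e ^ i) x, sameCycle_of_pow i rfl, (decomposeFin_pow e i x).symm⟩
  · rintro ⟨z, hz, rfl⟩
    obtain ⟨i, -, rfl⟩ := hz.exists_pow_eq'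
    exact sameCycle_of_pow i (decomposeFin_pow e i x)

lemma pnc_decomposeFin_zero (e : Perm (Fin n)) :
    pnc (Equiv.Perm.decomposeFin.symm (0, e)) = pnc e + 1 := by
  classical
  have huniv : (univ : Finset (Fin (n+1)))
      = insert 0 (univ.map (Fin.succEmb n)) := by
    ext y
    refine ⟨fun _ => ?_, fun _ => Finset.mem_univ y⟩
    rcases Fin.eq_zero_or_eq_succ y with h | ⟨z, rfl⟩
    · rw [h]; exact Finset.mem_insert_self _ _
    · exact Finset.mem_insert_of_mem (Finset.mem_map_of_mem _ (Finset.mem_univ z))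
  have : porbs (Equiv.Perm.decomposeFin.symm (0, e))
      = insert {0} ((porbs e).image (fun ω => ω.map (Fin.succEmb n))) := by
    rw [porbs, huniv, Finset.image_insert, pcls_decomposeFin_zero]
    congr 1
    rw [Finset.map_eq_image, Finset.image_image, porbs, Finset.image_image]
    exact Finset.image_congr (fun x _ => pcls_decomposeFin_succ e x)
  rw [pnc, this, Finset.card_insert_of_notMem, Finset.card_image_of_injective _
    (Finset.map_injective _)]
  · rfl
  · intro h
    obtain ⟨ω, hω, hωe⟩ := Finset.mem_image.1 h
    obtain ⟨x, -, rfl⟩ := Finset.mem_image.1 hω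
    have : x.succ ∈ ((pcls e x).map (Fin.succEmb n)) :=
      Finset.mem_map_of_mem _ (self_mem_pcls e x)
    rw [hωe, Finset.mem_singleton] at this
    exact Fin.succ_ne_zero x this

lemma decomposeFin_eq_swap_mul (p : Fin (n+1)) (e : Perm (Fin n)) :
    (Equiv.Perm.decomposeFin.symm (p, e) : Perm (Fin (n+1)))
      = Equiv.swap 0 p * Equiv.Perm.decomposeFin.symm (0, e) := by
  ext x
  refine Fin.cases ?_ (fun y => ?_) x
  · rw [Equiv.Perm.decomposeFin_symm_apply_zero, Equiv.Perm.mul_apply,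
      Equiv.Perm.decomposeFin_symm_apply_zero, Equiv.swap_apply_left]
  · rw [Equiv.Perm.decomposeFin_symm_apply_succ, Equiv.Perm.mul_apply, decomposeFin_zero_succ]

lemma pnc_decomposeFin (p : Fin (n+1)) (e : Perm (Fin n)) :
    pnc (Equiv.Perm.decomposeFin.symm (p, e)) = if p = 0 then pnc e + 1 else pnc e := by
  by_cases hp : p = 0
  · rw [if_pos hp, hp, pnc_decomposeFin_zero]
  · rw [if_neg hp, decomposeFin_eq_swap_mul]
    have h := pnc_swap_mul (a := (0 : Fin (n+1))) (p := p) (Ne.symm hp)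
      (Equiv.Perm.decomposeFin.symm (0, e)) (Equiv.Perm.decomposeFin_symm_apply_zero 0 e)
    rw [pnc_decomposeFin_zero] at h
    omega

/-- Count of permutations of `Fin n` with exactly `k` cycles. -/
noncomputable def cnk (n k : ℕ) : ℕ := Nat.card {σ : Perm (Fin n) // pnc σ = k}

lemma cnk_recursion (n k : ℕ) : cnk (n+1) (k+1) = cnk n k + n * cnk n (k+1) := by
  classical
  rw [cnk, Nat.card_congr ((Equiv.Perm.decomposeFin.symm.subtypeEquiv
    (fun pe => Iff.rfl)).symm : {σ : Perm (Fin (n+1)) // pnc σ = k+1}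
      ≃ {pe : Fin (n+1) × Perm (Fin n) // pnc (Equiv.Perm.decomposeFin.symm pe) = k+1})]
  rw [Nat.card_congr (Equiv.subtypeProdEquivSigmaSubtype
    (fun (p : Fin (n+1)) (e : Perm (Fin n)) => pnc (Equiv.Perm.decomposeFin.symm (p, e)) = k+1))]
  rw [Nat.card_eq_fintype_card, Fintype.card_sigma, Fin.sum_univ_succ]
  have h0 : Fintype.card {e : Perm (Fin n) // pnc (Equiv.Perm.decomposeFin.symm ((0 : Fin (n+1)), e)) = k+1}
      = cnk n k := by
    rw [cnk, Nat.card_eq_fintype_card]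
    apply Fintype.card_congr
    apply Equiv.subtypeEquivRight
    intro e
    rw [pnc_decomposeFin, if_pos rfl]
    omega
  have hs : ∀ i : Fin n, Fintype.card {e : Perm (Fin n) //
      pnc (Equiv.Perm.decomposeFin.symm ((i.succ : Fin (n+1)), e)) = k+1} = cnk n (k+1) := by
    intro i
    rw [cnk, Nat.card_eq_fintype_card]
    apply Fintype.card_congr
    apply Equiv.subtypeEquivRight
    intro e
    rw [pnc_decomposeFin, if_neg (Fin.succ_ne_zero i)]
  rw [h0, Finset.sum_congr rfl (fun i _ => hs i), Finset.sum_const, Finset.card_univ,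
    Fintype.card_fin, smul_eq_mul]

lemma cnk_zero (n : ℕ) (hn : 1 ≤ n) : cnk n 0 = 0 := by
  rw [cnk, Nat.card_eq_zero]
  left
  refine ⟨fun x => ?_⟩
  obtain ⟨σ, hσ⟩ := x
  have : Nonempty (Fin n) := ⟨⟨0, hn⟩⟩
  have := pnc_pos σ
  omega

lemma cnk_one (k : ℕ) : cnk 1 k = if k = 1 then 1 else 0 := by
  classical
  have huniq : ∀ σ : Perm (Fin 1), pnc σ = 1 := by
    intro σ
    have hσ : σ = 1 := Subsingleton.elim σ 1
    subst hσ
    have : porbs (1 : Perm (Fin 1)) = {{0}} := by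
      rw [porbs]
      rw [show (univ : Finset (Fin 1)) = {0} from rfl]
      rw [Finset.image_singleton, pcls_of_fixed rfl]
    rw [pnc, this, Finset.card_singleton]
  by_cases hk : k = 1
  · subst hk
    rw [if_pos rfl, cnk]
    rw [Nat.card_congr (Equiv.subtypeUnivEquiv huniq)]
    simp [Nat.card_eq_fintype_card]
  · rw [if_neg hk, cnk, Nat.card_eq_zero]
    left
    refine ⟨fun x => ?_⟩
    obtain ⟨σ, hσ⟩ := x
    exact hk (by rw [← hσ, huniq σ])

end FinStuff

/-- Elementary symmetric sum of the numbers `1/i`, `i ∈ A`, of degree `m`. -/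
noncomputable def esum (A : Finset ℕ) (m : ℕ) : ℝ :=
  ∑ T ∈ A.powersetCard m, ∏ i ∈ T, (1 / (i : ℝ))

lemma esum_zero (A : Finset ℕ) : esum A 0 = 1 := by
  simp [esum]

lemma esum_empty (m : ℕ) (hm : 1 ≤ m) : esum (∅ : Finset ℕ) m = 0 := by
  rw [esum, Finset.powersetCard_eq_empty.2 (by simp; omega), Finset.sum_empty]

lemma esum_nonneg (A : Finset ℕ) (m : ℕ) : 0 ≤ esum A m := by
  apply Finset.sum_nonneg
  intro T _
  exact Finset.prod_nonneg fun i _ => by positivity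

lemma esum_insert {A : Finset ℕ} {a : ℕ} (ha : a ∉ A) (m : ℕ) :
    esum (insert a A) (m + 1) = esum A (m + 1) + (1 / (a : ℝ)) * esum A m := by
  rw [esum, Finset.powersetCard_succ_insert ha, Finset.sum_union]
  · congr 1
    rw [Finset.sum_image (fun S hS S' hS' h => by
      have hnS : a ∉ S := fun hc => ha ((Finset.mem_powersetCard.1 hS).1 hc)
      have hnS' : a ∉ S' := fun hc => ha ((Finset.mem_powersetCard.1 hS').1 hc)
      rw [← Finset.erase_insert hnS, ← Finset.erase_insert hnS', h])]
    rw [esum, Finset.mul_sum]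
    apply Finset.sum_congr rfl
    intro S hS
    rw [Finset.prod_insert (fun haS => ha ((Finset.mem_powersetCard.1 hS).1 haS))]
  · rw [Finset.disjoint_right]
    intro T hT hT2
    obtain ⟨S, hS, rfl⟩ := Finset.mem_image.1 hT
    exact ha ((Finset.mem_powersetCard.1 hT2).1 (Finset.mem_insert_self a S))

lemma Icc_one_eq_insert (n : ℕ) (hn : 1 ≤ n) :
    Finset.Icc 1 n = insert n (Finset.Icc 1 (n - 1)) := by
  ext i
  simp only [Finset.mem_Icc, Finset.mem_insert]
  omega

lemma not_mem_Icc_pred (n : ℕ) : n ∉ Finset.Icc 1 (n - 1) := by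
  simp only [Finset.mem_Icc]
  omega

/-- The key counting identity: the number of permutations of `{1,…,n}` with `k` cycles
equals `(n-1)! e_{k-1}(1, 1/2, …, 1/(n-1))`. -/
lemma cnk_eq (n : ℕ) (hn : 1 ≤ n) : ∀ k : ℕ, 1 ≤ k →
    (cnk n k : ℝ) = (n - 1).factorial * esum (Finset.Icc 1 (n - 1)) (k - 1) := by
  induction n, hn using Nat.le_induction with
  | base =>
    intro k hk
    rcases Nat.lt_or_ge k 2 with h | h
    · have hk1 : k = 1 := by omega
      subst hk1
      rw [cnk_one]
      norm_num [esum_zero]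
    · rw [cnk_one, if_neg (by omega)]
      rw [show Finset.Icc 1 (1-1) = (∅ : Finset ℕ) from rfl, esum_empty (k - 1) (by omega)]
      norm_num
  | succ n hn ih =>
    intro k hk
    obtain ⟨k', rfl⟩ : ∃ k', k = k' + 1 := ⟨k - 1, by omega⟩
    rw [cnk_recursion]
    have hfac : ((n.factorial : ℕ) : ℝ) = (n : ℝ) * ((n - 1).factorial : ℝ) := by
      have : n * (n-1).factorial = n.factorial := Nat.mul_factorial_pred (by omega)
      rw [← this]
      push_cast
      ring
    rcases Nat.eq_zero_or_pos k' with rfl | hk'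
    · rw [cnk_zero n hn]
      push_cast
      rw [ih 1 le_rfl]
      simp only [Nat.sub_self, esum_zero, show n + 1 - 1 = n from rfl]
      rw [hfac]
      ring
    · push_cast
      rw [ih k' hk', ih (k' + 1) (by omega)]
      simp only [Nat.add_sub_cancel, show n + 1 - 1 = n from rfl]
      obtain ⟨m, rfl⟩ : ∃ m, k' = m + 1 := ⟨k' - 1, by omega⟩
      rw [Icc_one_eq_insert n hn, esum_insert (not_mem_Icc_pred n) m]
      simp only [Nat.add_sub_cancel]
      rw [hfac]
      have hn0 : (n : ℝ) ≠ 0 := by positivity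
      field_simp
      ring

noncomputable def Psq (I : Finset ℕ) : ℝ := ∑ j ∈ I, ((1 : ℝ) / j) ^ 2

lemma Hset_nonneg (A : Finset ℕ) : 0 ≤ Hset A :=
  Finset.sum_nonneg fun i _ => by positivity

lemma Psq_nonneg (A : Finset ℕ) : 0 ≤ Psq A :=
  Finset.sum_nonneg fun i _ => by positivity

lemma esum_one (A : Finset ℕ) : esum A 1 = Hset A := by
  rw [esum, Finset.powersetCard_one, Finset.sum_map, Hset]
  apply Finset.sum_congr rfl
  intro i _
  simp

/-- Decomposition `H(A) ⬝ e_m = (m+1) e_{m+1} + q_m`. -/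
lemma hset_mul_esum (A : Finset ℕ) (m : ℕ) :
    Hset A * esum A m
      = (m + 1 : ℝ) * esum A (m + 1)
        + ∑ S ∈ A.powersetCard m, ∑ i ∈ S, (1 / (i:ℝ)) * ∏ j ∈ S, (1 / (j:ℝ)) := by
  have expand : Hset A * esum A m
      = ∑ S ∈ A.powersetCard m, ∑ i ∈ A, (1 / (i:ℝ)) * ∏ j ∈ S, (1 / (j:ℝ)) := by
    rw [esum, Finset.mul_sum]
    apply Finset.sum_congr rfl
    intro S _
    rw [Hset, Finset.sum_mul]
  have split : ∀ S ∈ A.powersetCard m,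
      ∑ i ∈ A, (1 / (i:ℝ)) * ∏ j ∈ S, (1 / (j:ℝ))
        = ∑ i ∈ A \ S, (1 / (i:ℝ)) * ∏ j ∈ S, (1 / (j:ℝ))
          + ∑ i ∈ S, (1 / (i:ℝ)) * ∏ j ∈ S, (1 / (j:ℝ)) := by
    intro S hS
    rw [Finset.sum_sdiff (Finset.mem_powersetCard.1 hS).1]
  rw [expand, Finset.sum_congr rfl split, Finset.sum_add_distrib]
  congr 1
  -- the off-diagonal part equals (m+1) e_{m+1}
  have lhs_eq : ∑ S ∈ A.powersetCard m, ∑ i ∈ A \ S, (1 / (i:ℝ)) * ∏ j ∈ S, (1 / (j:ℝ))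
      = ∑ x ∈ (A.powersetCard m).sigma (fun S => A \ S),
          ∏ j ∈ insert x.2 x.1, (1 / (j:ℝ)) := by
    refine Eq.trans ?_ (Finset.sum_sigma' (A.powersetCard m) (fun S => A \ S)
      (fun S i => ∏ j ∈ insert i S, (1 / (j:ℝ))))
    apply Finset.sum_congr rfl
    intro S hS
    apply Finset.sum_congr rfl
    intro i hi
    rw [Finset.prod_insert (Finset.mem_sdiff.1 hi).2]
  have rhs_eq : (m + 1 : ℝ) * esum A (m + 1)
      = ∑ x ∈ (A.powersetCard (m+1)).sigma (fun T => T), ∏ j ∈ x.1, (1 / (j:ℝ)) := by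
    refine Eq.trans ?_ (Finset.sum_sigma' (A.powersetCard (m+1)) (fun T => (T : Finset ℕ))
      (fun T _ => ∏ j ∈ T, (1 / (j:ℝ))))
    rw [esum, Finset.mul_sum]
    apply Finset.sum_congr rfl
    intro T hT
    rw [Finset.sum_const, nsmul_eq_mul, (Finset.mem_powersetCard.1 hT).2]
    push_cast
    ring
  rw [lhs_eq, rhs_eq]
  refine Finset.sum_nbij' (fun x => ⟨insert x.2 x.1, x.2⟩) (fun x => ⟨x.1.erase x.2, x.2⟩)
    ?_ ?_ ?_ ?_ ?_
  · rintro ⟨S, i⟩ h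
    rw [Finset.mem_sigma] at h
    obtain ⟨hS, hi⟩ := h
    obtain ⟨hSA, hScard⟩ := Finset.mem_powersetCard.1 hS
    obtain ⟨hiA, hiS⟩ := Finset.mem_sdiff.1 hi
    rw [Finset.mem_sigma]
    constructor
    · rw [Finset.mem_powersetCard]
      exact ⟨Finset.insert_subset hiA hSA, by rw [Finset.card_insert_of_notMem hiS, hScard]⟩
    · exact Finset.mem_insert_self _ _
  · rintro ⟨T, i⟩ h
    rw [Finset.mem_sigma] at h
    obtain ⟨hT, hi⟩ := h
    obtain ⟨hTA, hTcard⟩ := Finset.mem_powersetCard.1 hT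
    rw [Finset.mem_sigma]
    constructor
    · rw [Finset.mem_powersetCard]
      exact ⟨(Finset.erase_subset _ _).trans hTA,
        by simp [Finset.card_erase_of_mem hi, hTcard]⟩
    · exact Finset.mem_sdiff.2 ⟨hTA hi, Finset.notMem_erase _ _⟩
  · rintro ⟨S, i⟩ h
    rw [Finset.mem_sigma] at h
    have hiS := (Finset.mem_sdiff.1 h.2).2
    simp [Finset.erase_insert hiS]
  · rintro ⟨T, i⟩ h
    rw [Finset.mem_sigma] at h
    simp [Finset.insert_erase h.2]
  · rintro ⟨S, i⟩ _
    rfl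

/-- The diagonal part `q_m` expressed via erased sets. -/
lemma qsum_eq (A : Finset ℕ) (m : ℕ) (hm : 1 ≤ m) :
    ∑ S ∈ A.powersetCard m, ∑ i ∈ S, (1 / (i:ℝ)) * ∏ j ∈ S, (1 / (j:ℝ))
      = ∑ i ∈ A, (1 / (i:ℝ))^2 * ∑ S ∈ (A.erase i).powersetCard (m-1), ∏ j ∈ S, (1 / (j:ℝ)) := by
  have lhs_eq : ∑ S ∈ A.powersetCard m, ∑ i ∈ S, (1 / (i:ℝ)) * ∏ j ∈ S, (1 / (j:ℝ))
      = ∑ x ∈ (A.powersetCard m).sigma (fun S => S),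
          (1 / (x.2:ℝ)) * ∏ j ∈ x.1, (1 / (j:ℝ)) :=
    Finset.sum_sigma' (A.powersetCard m) (fun S => (S : Finset ℕ))
      (fun S i => (1 / (i:ℝ)) * ∏ j ∈ S, (1 / (j:ℝ)))
  have rhs_eq : ∑ i ∈ A, (1 / (i:ℝ))^2 * ∑ S ∈ (A.erase i).powersetCard (m-1), ∏ j ∈ S, (1 / (j:ℝ))
      = ∑ x ∈ A.sigma (fun i => (A.erase i).powersetCard (m-1)),
          (1 / (x.1:ℝ))^2 * ∏ j ∈ x.2, (1 / (j:ℝ)) := by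
    refine Eq.trans ?_ (Finset.sum_sigma' A (fun i => (A.erase i).powersetCard (m-1))
      (fun i S => (1 / (i:ℝ))^2 * ∏ j ∈ S, (1 / (j:ℝ))))
    apply Finset.sum_congr rfl
    intro i _
    rw [Finset.mul_sum]
  rw [lhs_eq, rhs_eq]
  refine Finset.sum_nbij' (fun x => ⟨x.2, x.1.erase x.2⟩) (fun x => ⟨insert x.1 x.2, x.1⟩)
    ?_ ?_ ?_ ?_ ?_
  · rintro ⟨S, i⟩ h
    rw [Finset.mem_sigma] at h
    obtain ⟨hS, hi⟩ := h
    obtain ⟨hSA, hScard⟩ := Finset.mem_powersetCard.1 hS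
    rw [Finset.mem_sigma]
    refine ⟨hSA hi, ?_⟩
    rw [Finset.mem_powersetCard]
    constructor
    · exact Finset.erase_subset_erase _ hSA
    · rw [Finset.card_erase_of_mem hi, hScard]
  · rintro ⟨i, S⟩ h
    rw [Finset.mem_sigma] at h
    obtain ⟨hiA, hS⟩ := h
    obtain ⟨hSA, hScard⟩ := Finset.mem_powersetCard.1 hS
    have hiS : i ∉ S := fun hc => Finset.notMem_erase i A (hSA hc)
    rw [Finset.mem_sigma]
    constructor
    · rw [Finset.mem_powersetCard]
      refine ⟨Finset.insert_subset hiA (hSA.trans (Finset.erase_subset _ _)), ?_⟩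
      rw [Finset.card_insert_of_notMem hiS, hScard]
      omega
    · exact Finset.mem_insert_self _ _
  · rintro ⟨S, i⟩ h
    rw [Finset.mem_sigma] at h
    simp [Finset.insert_erase h.2]
  · rintro ⟨i, S⟩ h
    rw [Finset.mem_sigma] at h
    obtain ⟨hiA, hS⟩ := h
    have hiS : i ∉ S := fun hc =>
      Finset.notMem_erase i A ((Finset.mem_powersetCard.1 hS).1 hc)
    simp [Finset.erase_insert hiS]
  · rintro ⟨S, i⟩ h
    rw [Finset.mem_sigma] at h
    rw [← Finset.mul_prod_erase _ _ h.2]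
    ring

lemma qsum_nonneg (A : Finset ℕ) (m : ℕ) :
    0 ≤ ∑ S ∈ A.powersetCard m, ∑ i ∈ S, (1 / (i:ℝ)) * ∏ j ∈ S, (1 / (j:ℝ)) := by
  apply Finset.sum_nonneg
  intro S _
  apply Finset.sum_nonneg
  intro i _
  have : (0:ℝ) ≤ ∏ j ∈ S, (1 / (j:ℝ)) := Finset.prod_nonneg fun j _ => by positivity
  positivity

lemma qsum_le (A : Finset ℕ) (m : ℕ) (hm : 1 ≤ m) :
    ∑ S ∈ A.powersetCard m, ∑ i ∈ S, (1 / (i:ℝ)) * ∏ j ∈ S, (1 / (j:ℝ))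
      ≤ Psq A * esum A (m - 1) := by
  rw [qsum_eq A m hm, Psq, Finset.sum_mul]
  apply Finset.sum_le_sum
  intro i hi
  have h1 : ∑ S ∈ (A.erase i).powersetCard (m-1), ∏ j ∈ S, (1 / (j:ℝ)) ≤ esum A (m-1) := by
    rw [esum]
    apply Finset.sum_le_sum_of_subset_of_nonneg
    · exact Finset.powersetCard_mono (Finset.erase_subset _ _)
    · intro S _ _
      exact Finset.prod_nonneg fun j _ => by positivity
  have h2 : (0:ℝ) ≤ (1 / (i:ℝ))^2 := by positivity
  calc (1 / (i:ℝ))^2 * ∑ S ∈ (A.erase i).powersetCard (m-1), ∏ j ∈ S, (1 / (j:ℝ))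
      ≤ (1 / (i:ℝ))^2 * esum A (m-1) := by
        exact mul_le_mul_of_nonneg_left h1 h2
    _ = _ := rfl

lemma succ_esum_le (A : Finset ℕ) (m : ℕ) :
    (m + 1 : ℝ) * esum A (m + 1) ≤ Hset A * esum A m := by
  rw [hset_mul_esum A m]
  have := qsum_nonneg A m
  linarith

lemma esum_le_pow (A : Finset ℕ) (m : ℕ) :
    (m.factorial : ℝ) * esum A m ≤ Hset A ^ m := by
  induction m with
  | zero => simp [esum_zero]
  | succ m ih =>
    have h1 : ((m+1).factorial : ℝ) * esum A (m+1)
        = (m.factorial : ℝ) * ((m + 1 : ℝ) * esum A (m+1)) := by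
      rw [Nat.factorial_succ]
      push_cast
      ring
    rw [h1, pow_succ]
    calc (m.factorial : ℝ) * ((m + 1 : ℝ) * esum A (m+1))
        ≤ (m.factorial : ℝ) * (Hset A * esum A m) := by
          apply mul_le_mul_of_nonneg_left (succ_esum_le A m)
          positivity
      _ = Hset A * ((m.factorial : ℝ) * esum A m) := by ring
      _ ≤ Hset A * Hset A ^ m := mul_le_mul_of_nonneg_left ih (Hset_nonneg A)
      _ = Hset A ^ m * Hset A := by ring

lemma esum_ge_lower (A : Finset ℕ) (m : ℕ) :
    Hset A ^ m - (m.choose 2 : ℝ) * Psq A * Hset A ^ (m - 2)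
      ≤ (m.factorial : ℝ) * esum A m := by
  rcases m with _ | m
  · simp [esum_zero]
  rcases m with _ | m
  · simp [esum_one]
  -- now prove for m+2 by induction on m
  induction m with
  | zero =>
    -- H^2 - p2 ≤ 2 e_2
    have hb := hset_mul_esum A 1
    have hq := qsum_le A 1 le_rfl
    rw [esum_one] at hb
    rw [show (1:ℕ) - 1 = 0 from rfl, esum_zero, mul_one] at hq
    norm_num [Nat.choose_self, Nat.factorial]
    push_cast at hb ⊢
    nlinarith [hb, hq]
  | succ m ih =>
    have hb := hset_mul_esum A (m + 2)
    have hq := qsum_le A (m + 2) (by omega)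
    have hc := esum_le_pow A (m + 1)
    have hH := Hset_nonneg A
    have hP := Psq_nonneg A
    have hchoose : ((m+3).choose 2 : ℝ) = ((m+2).choose 2 : ℝ) + (m + 2 : ℝ) := by
      rw [Nat.choose_succ_succ (m+2) 1]
      push_cast [Nat.choose_one_right]
      ring
    simp only [show m + 1 + 1 = m + 2 from rfl, show m + 1 + 1 - 2 = m from rfl] at ih
    simp only [show m + 2 + 1 = m + 3 from rfl] at hb ⊢
    simp only [show m + 1 + 2 - 2 = m + 1 from rfl, show m + 1 + 2 = m + 3 from rfl]
    have e3 : ((m+3).factorial : ℝ) = (m+3) * ((m+2).factorial : ℝ) := by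
      rw [show m + 3 = (m+2) + 1 from rfl, Nat.factorial_succ]
      push_cast; ring
    have e2 : ((m+2).factorial : ℝ) = (m+2) * ((m+1).factorial : ℝ) := by
      rw [show m + 2 = (m+1) + 1 from rfl, Nat.factorial_succ]
      push_cast; ring
    have hF1 : (0:ℝ) ≤ ((m+1).factorial : ℝ) := by positivity
    have hF2 : (0:ℝ) ≤ ((m+2).factorial : ℝ) := by positivity
    push_cast at hb
    -- hb : Hset A * esum A (m+2) = (m+2+1) * esum A (m+3) + q
    have step1 : ((m+3).factorial : ℝ) * esum A (m+3)
        = ((m+2).factorial : ℝ) * (Hset A * esum A (m+2)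
            - ∑ S ∈ A.powersetCard (m+2), ∑ i ∈ S, (1 / (i:ℝ)) * ∏ j ∈ S, (1 / (j:ℝ))) := by
      rw [e3]
      rw [show Hset A * esum A (m+2)
          - ∑ S ∈ A.powersetCard (m+2), ∑ i ∈ S, (1 / (i:ℝ)) * ∏ j ∈ S, (1 / (j:ℝ))
          = ((m:ℝ)+2+1) * esum A (m+3) from by linarith [hb]]
      push_cast
      ring
    have step2 : ((m+2).factorial : ℝ) * (Hset A * esum A (m+2)
            - ∑ S ∈ A.powersetCard (m+2), ∑ i ∈ S, (1 / (i:ℝ)) * ∏ j ∈ S, (1 / (j:ℝ)))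
        ≥ Hset A * (((m+2).factorial : ℝ) * esum A (m+2))
            - ((m+2):ℝ) * Psq A * (((m+1).factorial : ℝ) * esum A (m+1)) := by
      have h1 : ((m+2).factorial : ℝ)
          * (∑ S ∈ A.powersetCard (m+2), ∑ i ∈ S, (1 / (i:ℝ)) * ∏ j ∈ S, (1 / (j:ℝ)))
          ≤ ((m+2).factorial : ℝ) * (Psq A * esum A (m+1)) :=
        mul_le_mul_of_nonneg_left hq hF2
      rw [e2] at h1 ⊢
      nlinarith [h1]
    have step3 : Hset A * (((m+2).factorial : ℝ) * esum A (m+2))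
            - ((m+2):ℝ) * Psq A * (((m+1).factorial : ℝ) * esum A (m+1))
        ≥ Hset A * (Hset A ^ (m+2) - ((m+2).choose 2 : ℝ) * Psq A * Hset A ^ m)
            - ((m+2):ℝ) * Psq A * Hset A ^ (m+1) := by
      have h1 := mul_le_mul_of_nonneg_left ih hH
      have h2 : ((m+2):ℝ) * Psq A * (((m+1).factorial : ℝ) * esum A (m+1))
          ≤ ((m+2):ℝ) * Psq A * Hset A ^ (m+1) := by
        apply mul_le_mul_of_nonneg_left hc
        positivity
      linarith
    have hpow1 : Hset A * Hset A ^ (m+2) = Hset A ^ (m+3) := by ring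
    have hpow2 : Hset A * (((m+2).choose 2 : ℝ) * Psq A * Hset A ^ m)
        = ((m+2).choose 2 : ℝ) * Psq A * Hset A ^ (m+1) := by ring
    rw [hchoose]
    nlinarith [step1, step2, step3, hpow1, hpow2]

lemma two_mul_choose_two (m : ℕ) : 2 * m.choose 2 = m * (m - 1) := by
  rw [Nat.choose_two_right]
  rcases Nat.eq_zero_or_pos m with rfl | hm
  · rfl
  · obtain ⟨p, rfl⟩ : ∃ p, m = p + 1 := ⟨m - 1, by omega⟩
    rw [show p + 1 - 1 = p from rfl]
    have hev : Even ((p+1) * p) := by simpa [mul_comm] using Nat.even_mul_succ_self p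
    obtain ⟨t, ht⟩ := hev
    omega

lemma Psq_Icc_le (N : ℕ) : Psq (Finset.Icc 1 N) ≤ 2 := by
  rcases Nat.eq_zero_or_pos N with rfl | hN
  · rw [show Finset.Icc 1 0 = (∅ : Finset ℕ) from rfl]
    simp [Psq]
  have key : ∀ M : ℕ, 1 ≤ M → Psq (Finset.Icc 1 M) ≤ 2 - 1 / (M : ℝ) := by
    intro M hM
    induction M, hM using Nat.le_induction with
    | base =>
      rw [show Finset.Icc 1 1 = ({1} : Finset ℕ) from rfl]
      norm_num [Psq]
    | succ M hM ih =>
      rw [Icc_one_eq_insert (M+1) (by omega), show M + 1 - 1 = M from rfl, Psq,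
        Finset.sum_insert (show (M+1) ∉ Finset.Icc 1 M by simp)]
      have hM1 : (1:ℝ) ≤ (M:ℝ) := by exact_mod_cast hM
      have step : ((1:ℝ) / (M+1))^2 ≤ 1 / (M:ℝ) - 1 / ((M:ℝ)+1) := by
        have h1 : ((1:ℝ) / (M+1))^2 ≤ 1 / ((M:ℝ) * ((M:ℝ)+1)) := by
          rw [div_pow, one_pow]
          apply one_div_le_one_div_of_le
          · positivity
          · nlinarith
        have h2 : 1 / ((M:ℝ) * ((M:ℝ)+1)) = 1 / (M:ℝ) - 1 / ((M:ℝ)+1) := by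
          field_simp
          ring
        linarith [h1, h2.symm.le]
      have : Psq (Finset.Icc 1 M) ≤ 2 - 1/(M:ℝ) := ih
      rw [Psq] at this
      push_cast
      linarith
  have := key N hN
  have hN1 : (0:ℝ) < (N:ℝ) := by exact_mod_cast hN
  have : (0:ℝ) < 1 / (N:ℝ) := by positivity
  linarith [key N hN]

lemma Hset_Icc_eq_harmonic (m : ℕ) : Hset (Finset.Icc 1 m) = ((harmonic m : ℚ) : ℝ) := by
  rw [Hset, ← Finset.Ico_add_one_right_eq_Icc, Finset.sum_Ico_eq_sum_range]
  rw [show m + 1 - 1 = m from rfl]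
  rw [harmonic]
  push_cast
  apply Finset.sum_congr rfl
  intro i _
  rw [one_div, add_comm]

lemma log_le_Hset (m : ℕ) : Real.log (m + 1) ≤ Hset (Finset.Icc 1 m) := by
  rw [Hset_Icc_eq_harmonic]
  exact_mod_cast log_add_one_le_harmonic m

lemma Hset_Icc_le_card (N : ℕ) : Hset (Finset.Icc 1 N) ≤ N := by
  rw [Hset]
  calc ∑ j ∈ Finset.Icc 1 N, (1:ℝ)/j ≤ ∑ j ∈ Finset.Icc 1 N, 1 := by
        apply Finset.sum_le_sum
        intro i hi
        have h1 : 1 ≤ i := (Finset.mem_Icc.1 hi).1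
        have : (1:ℝ) ≤ (i:ℝ) := by exact_mod_cast h1
        rw [div_le_one (by linarith)]
        exact this
    _ = (N : ℝ) := by
        rw [Finset.sum_const, Nat.card_Icc]
        simp

lemma pow_sub_ge {a b : ℝ} (ha : 0 ≤ a) (hab : a ≤ b) :
    ∀ m : ℕ, b ^ m - (m : ℝ) * a * b ^ (m - 1) ≤ (b - a) ^ m := by
  intro m
  induction m with
  | zero => simp
  | succ m ih =>
    have hb : 0 ≤ b := ha.trans hab
    have hba : 0 ≤ b - a := by linarith
    have h1 : (b - a) ^ (m+1) = (b - a) * (b - a)^m := by ring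
    have h2 : (b - a) * (b^m - (m:ℝ) * a * b^(m-1)) ≤ (b - a) * (b - a)^m :=
      mul_le_mul_of_nonneg_left ih hba
    rcases Nat.eq_zero_or_pos m with rfl | hm
    · simp
    · obtain ⟨p, rfl⟩ : ∃ p, m = p + 1 := ⟨m - 1, by omega⟩
      rw [show p + 1 - 1 = p from rfl] at h2
      rw [show p + 1 + 1 - 1 = p + 1 from rfl]
      rw [h1]
      simp only [show p + 1 + 1 = p + 2 from rfl] at *
      have expand : (b - a) * (b^(p+1) - ((p+1:ℕ):ℝ) * a * b^p)
          = b^(p+2) - ((p+2:ℕ):ℝ) * a * b^(p+1) + ((p+1:ℕ):ℝ) * a^2 * b^p := by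
        push_cast
        ring
      have hsq : 0 ≤ ((p+1:ℕ):ℝ) * a^2 * b^p := by positivity
      push_cast at expand h2 hsq ⊢
      linarith [h2, hsq, expand]

lemma harm_eq (n : ℕ) (hn : 1 ≤ n) : harm n = Hset (Finset.Icc 1 (n-1)) + 1/(n:ℝ) := by
  rw [harm, Icc_one_eq_insert n hn, Hset, Finset.sum_insert (not_mem_Icc_pred n), Hset]
  ring


set_option maxHeartbeats 1000000 in
/-- **Lower bound for the number of permutations with `k` cycles.** For
`1 ≤ k < log n`,
`P(C(σ) = k) ≥ (H_n^{k-1}/(n (k-1)!)) (1 - (k-1)/log n)`. -/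
theorem lower_bound_k_cycles (n k : ℕ) (hk : 1 ≤ k) (hklog : (k : ℝ) < Real.log n) :
    harm n ^ (k - 1) / (n * (k - 1).factorial) *
        (1 - ((k : ℝ) - 1) / Real.log n)
      ≤ permP n (fun σ => totalCycles σ = k) := by
  classical
  have hk1 : (1:ℝ) ≤ (k:ℝ) := by exact_mod_cast hk
  have hn : 1 ≤ n := by
    rcases Nat.eq_zero_or_pos n with rfl | h
    · rw [Nat.cast_zero, Real.log_zero] at hklog; linarith
    · exact h
  obtain ⟨m, hkm⟩ : ∃ m, k = m + 1 := ⟨k - 1, by omega⟩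
  have hkm1 : k - 1 = m := by omega
  set L := Real.log n with hLdef
  have hL1 : (1:ℝ) < L := lt_of_le_of_lt hk1 hklog
  have hL0 : (0:ℝ) < L := by linarith
  set A := Finset.Icc 1 (n-1) with hA
  set p1 := Hset A with hp1def
  set H := harm n with hHdef
  have h1n : (0:ℝ) < (n:ℝ) := by exact_mod_cast hn
  have hHp1 : H = p1 + 1/(n:ℝ) := harm_eq n hn
  have hp1L : L ≤ p1 := by
    have h := log_le_Hset (n-1)
    rw [show ((n-1:ℕ):ℝ) + 1 = (n:ℝ) by rw [Nat.cast_sub hn]; push_cast; ring] at h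
    exact h
  have hp1nn : (0:ℝ) ≤ p1 := Hset_nonneg A
  have hp1H : p1 ≤ H := by
    rw [hHp1]
    have : (0:ℝ) ≤ 1/(n:ℝ) := by positivity
    linarith
  have hHL : L ≤ H := hp1L.trans hp1H
  have hHn : H ≤ (n:ℝ) := Hset_Icc_le_card n
  have hP2 : Psq A ≤ 2 := Psq_Icc_le (n-1)
  have hP0 : (0:ℝ) ≤ Psq A := Psq_nonneg A
  have hmL : ((m:ℕ):ℝ) ≤ L - 1 := by
    rw [hkm] at hklog
    push_cast at hklog
    linarith
  -- express the probability
  have hcard : Nat.card {σ : Equiv.Perm (Fin n) // totalCycles σ = k} = cnk n k := by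
    rw [cnk]
    exact Nat.card_congr (Equiv.subtypeEquivRight (fun σ => by rw [totalCycles_eq]))
  have hfacn : ((n.factorial:ℕ):ℝ) = (n:ℝ) * ((n-1).factorial:ℝ) := by
    have h := Nat.mul_factorial_pred (show n ≠ 0 by omega)
    rw [← h]
    push_cast
    ring
  have hcount : permP n (fun σ => totalCycles σ = k) = esum A m / (n:ℝ) := by
    rw [permP, hcard, cnk_eq n hn k hk, hkm1, hfacn]
    have hf0 : (((n-1).factorial:ℕ):ℝ) ≠ 0 := by positivity
    field_simp
    ring
  rw [hcount, hkm1]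
  have hck : ((k:ℝ) - 1) = ((m:ℕ):ℝ) := by rw [hkm]; push_cast; ring
  rw [hck]
  -- key inequality
  have hfacm : (0:ℝ) < ((m.factorial:ℕ):ℝ) := by positivity
  have hmain : H ^ m * (1 - ((m:ℕ):ℝ)/L) ≤ (m.factorial:ℝ) * esum A m := by
    have hlow := esum_ge_lower A m
    have hHnn : (0:ℝ) ≤ H := hp1nn.trans hp1H
    rcases Nat.eq_zero_or_pos m with rfl | hm1
    · simpa using hlow
    -- m ≥ 1
    have hpow : H^m - ((m:ℕ):ℝ) * (1/(n:ℝ)) * H^(m-1) ≤ p1^m := by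
      have h := pow_sub_ge (a := 1/(n:ℝ)) (b := H) (by positivity)
        (by nlinarith [hHL, hL1, h1n]) m
      rw [show H - 1/(n:ℝ) = p1 by rw [hHp1]; ring] at h
      exact h
    have hmid : ((m.choose 2:ℕ):ℝ) * Psq A * p1^(m-2) ≤ ((m:ℕ):ℝ) * (((m:ℕ):ℝ)-1) * H^(m-2) := by
      have hc2 : ((m.choose 2:ℕ):ℝ) * 2 = ((m:ℕ):ℝ) * (((m:ℕ):ℝ)-1) := by
        have h := two_mul_choose_two m
        have h2 := congrArg (fun x : ℕ => (x:ℝ)) h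
        push_cast [Nat.cast_sub hm1] at h2
        linarith
      have hpp : p1^(m-2) ≤ H^(m-2) := pow_le_pow_left₀ hp1nn hp1H (m-2)
      have hc0 : (0:ℝ) ≤ ((m.choose 2:ℕ):ℝ) := by positivity
      have hpnn : (0:ℝ) ≤ p1^(m-2) := by positivity
      calc ((m.choose 2:ℕ):ℝ) * Psq A * p1^(m-2)
          ≤ ((m.choose 2:ℕ):ℝ) * 2 * H^(m-2) := by
            apply mul_le_mul (by nlinarith [hc0]) hpp hpnn (by positivity)
        _ = ((m:ℕ):ℝ) * (((m:ℕ):ℝ)-1) * H^(m-2) := by rw [hc2]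
    have hnum : ((m:ℕ):ℝ) * (1/(n:ℝ)) * H^(m-1) + ((m:ℕ):ℝ) * (((m:ℕ):ℝ)-1) * H^(m-2)
        ≤ (((m:ℕ):ℝ)/L) * H^m := by
      rcases Nat.lt_or_ge m 2 with hm2 | hm2
      · -- m = 1
        have hm1' : m = 1 := by omega
        subst hm1'
        simp only [pow_one, pow_zero]
        have e1 : ((1:ℕ):ℝ) = 1 := by norm_num
        rw [e1]
        have h1 : (1:ℝ)/(n:ℝ) ≤ 1 := by
          rw [div_le_one h1n]; exact_mod_cast hn
        have h2 : (1:ℝ) ≤ H/L := by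
          rw [le_div_iff₀ hL0]; linarith
        have h3 : H/L = (1/L) * H := by ring
        norm_num
        calc (↑n)⁻¹ ≤ 1 := by rw [← one_div]; exact h1
          _ ≤ H/L := h2
          _ = L⁻¹ * H := by ring
      · obtain ⟨q, rfl⟩ : ∃ q, m = q + 2 := ⟨m - 2, by omega⟩
        rw [show q + 2 - 1 = q + 1 from rfl, show q + 2 - 2 = q from rfl]
        have hHq : (0:ℝ) ≤ H^q := by positivity
        have hbase : (1/(n:ℝ))*H + (((q+2:ℕ):ℝ)-1) ≤ H^2/L := by
          have h1 : (1/(n:ℝ))*H ≤ 1 := by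
            rw [div_mul_eq_mul_div, one_mul, div_le_one h1n]
            exact hHn
          have h2 : H ≤ H^2/L := by
            rw [le_div_iff₀ hL0]
            calc H * L ≤ H * H := mul_le_mul_of_nonneg_left hHL hHnn
              _ = H^2 := (sq H).symm
          have h3 : (((q+2:ℕ):ℝ)-1) ≤ L - 2 := by
            push_cast at hmL ⊢
            linarith
          linarith
        have hmnn : (0:ℝ) ≤ ((q+2:ℕ):ℝ) := by positivity
        have := mul_le_mul_of_nonneg_left hbase (mul_nonneg hmnn hHq)
        calc ((q+2:ℕ):ℝ) * (1/(n:ℝ)) * H^(q+1) + ((q+2:ℕ):ℝ) * (((q+2:ℕ):ℝ)-1) * H^q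
            = (((q+2:ℕ):ℝ) * H^q) * ((1/(n:ℝ))*H + (((q+2:ℕ):ℝ)-1)) := by ring
          _ ≤ (((q+2:ℕ):ℝ) * H^q) * (H^2/L) := this
          _ = (((q+2:ℕ):ℝ)/L) * H^(q+2) := by ring
    have hexp : H ^ m * (1 - ((m:ℕ):ℝ)/L) = H^m - (((m:ℕ):ℝ)/L) * H^m := by ring
    rw [hexp]
    linarith [hlow, hpow, hmid, hnum]
  -- conclude
  have heq : H ^ m / ((n:ℝ) * ((m.factorial:ℕ):ℝ)) * (1 - ((m:ℕ):ℝ)/L)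
      = (H ^ m * (1 - ((m:ℕ):ℝ)/L) / ((m.factorial:ℕ):ℝ)) / (n:ℝ) := by
    rw [div_div, div_mul_eq_mul_div, mul_comm ((m.factorial:ℕ):ℝ) (n:ℝ)]
  rw [heq]
  have hfinal : H ^ m * (1 - ((m:ℕ):ℝ)/L) / ((m.factorial:ℕ):ℝ) ≤ esum A m := by
    rw [div_le_iff₀ hfacm]
    linarith [hmain]
  gcongr
end

section
/- For all integers 1 ≤ m ≤ n, the probability ν(n,m) that a uniformly random σ ∈ S_n has no cycle of length greater than m satisfies ν(n,m) ≤ e^{−u log u + u − 1}, where u = n/m. -/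
open Finset

open Equiv Equiv.Perm Function

variable {β : Type*} {γ : Type*}

lemma perm_mem_periodicPts [Finite β] (σ : Perm β) (x : β) : x ∈ periodicPts ⇑σ := by
  refine mk_mem_periodicPts (orderOf_pos σ) ?_
  show σ^[orderOf σ] x = x
  rw [Equiv.Perm.iterate_eq_pow, pow_orderOf_eq_one]
  rfl

lemma perm_minimalPeriod_pos [Finite β] (σ : Perm β) (x : β) :
    0 < minimalPeriod ⇑σ x :=
  minimalPeriod_pos_of_mem_periodicPts (perm_mem_periodicPts σ x)

/-- if `f` and `g` agree on `S` and `f` maps `S` into `S`, minimal periods agree on `S`. -/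
lemma minimalPeriod_congr_set {f g : β → β} {S : Set β}
    (hfg : ∀ y ∈ S, f y = g y) (hf : ∀ y ∈ S, f y ∈ S) {x : β} (hx : x ∈ S) :
    minimalPeriod f x = minimalPeriod g x := by
  have key : ∀ n : ℕ, f^[n] x ∈ S ∧ f^[n] x = g^[n] x := by
    intro n
    induction n with
    | zero => exact ⟨hx, rfl⟩
    | succ n ih =>
      constructor
      · rw [iterate_succ_apply']; exact hf _ ih.1
      · rw [iterate_succ_apply', iterate_succ_apply', ← ih.2, hfg _ ih.1]
  rw [minimalPeriod_eq_minimalPeriod_iff]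
  intro n
  unfold IsPeriodicPt IsFixedPt
  rw [(key n).2]

lemma minimalPeriod_permCongr (e : β ≃ γ) (σ : Perm β) (x : β) :
    minimalPeriod ⇑(e.permCongr σ) (e x) = minimalPeriod ⇑σ x := by
  have key : ∀ n : ℕ, (⇑(e.permCongr σ))^[n] (e x) = e (σ^[n] x) := by
    intro n
    induction n with
    | zero => rfl
    | succ n ih =>
      rw [iterate_succ_apply', iterate_succ_apply', ih, Equiv.permCongr_apply,
        Equiv.symm_apply_apply]
  rw [minimalPeriod_eq_minimalPeriod_iff]
  intro n
  unfold IsPeriodicPt IsFixedPt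
  rw [key n]
  exact e.apply_eq_iff_eq

lemma minimalPeriod_subtypePerm (σ : Perm β) {p : β → Prop} (h : ∀ x, p x ↔ p (σ x))
    (y : Subtype p) :
    minimalPeriod ⇑(σ.subtypePerm (fun x => (h x).symm)) y = minimalPeriod ⇑σ (y : β) := by
  have key : ∀ n : ℕ, ((⇑(σ.subtypePerm (fun x => (h x).symm)))^[n] y : β) = σ^[n] (y : β) := by
    intro n
    induction n with
    | zero => rfl
    | succ n ih => rw [iterate_succ_apply', iterate_succ_apply', ← ih]; rfl
  rw [minimalPeriod_eq_minimalPeriod_iff]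
  intro n
  unfold IsPeriodicPt IsFixedPt
  rw [← Subtype.coe_inj, key n]

lemma minimalPeriod_ofSubtype {p : β → Prop} [DecidablePred p] (c : Perm (Subtype p))
    {x : β} (hx : p x) :
    minimalPeriod ⇑(ofSubtype c) x = minimalPeriod ⇑c ⟨x, hx⟩ := by
  have key : ∀ n : ℕ, (⇑(ofSubtype c))^[n] x = ((⇑c)^[n] ⟨x, hx⟩ : β) := by
    intro n
    induction n with
    | zero => rfl
    | succ n ih =>
      rw [iterate_succ_apply', iterate_succ_apply', ih,
        ofSubtype_apply_of_mem c (((⇑c)^[n] ⟨x, hx⟩).2)]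
  rw [minimalPeriod_eq_minimalPeriod_iff]
  intro n
  unfold IsPeriodicPt IsFixedPt
  rw [key n, ← Subtype.coe_inj]

open Fin.NatCast in
lemma finRotate_iterate (j : ℕ) (t : ℕ) (k : Fin (j + 1)) :
    (⇑(finRotate (j + 1)))^[t] k = k + (t : Fin (j + 1)) := by
  induction t with
  | zero => simp
  | succ t ih =>
    rw [iterate_succ_apply', ih, finRotate_succ_apply]
    rw [Nat.cast_add, Nat.cast_one, add_assoc]

open Fin.NatCast in
lemma minimalPeriod_finRotate (j : ℕ) (k : Fin (j + 1)) :
    minimalPeriod ⇑(finRotate (j + 1)) k = j + 1 := by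
  have hper : IsPeriodicPt ⇑(finRotate (j + 1)) (j + 1) k := by
    show (⇑(finRotate (j + 1)))^[j + 1] k = k
    rw [finRotate_iterate]
    simp
  have h1 : minimalPeriod ⇑(finRotate (j + 1)) k ∣ j + 1 := hper.minimalPeriod_dvd
  have h2 : (j + 1) ∣ minimalPeriod ⇑(finRotate (j + 1)) k := by
    have hp := isPeriodicPt_minimalPeriod ⇑(finRotate (j + 1)) k
    rw [IsPeriodicPt, IsFixedPt, finRotate_iterate] at hp
    have : ((minimalPeriod ⇑(finRotate (j + 1)) k : ℕ) : Fin (j + 1)) = 0 := by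
      have h' : k + ((minimalPeriod ⇑(finRotate (j + 1)) k : ℕ) : Fin (j + 1)) = k + 0 := by
        rw [add_zero]; exact hp
      exact add_left_cancel h'
    rwa [Fin.natCast_eq_zero] at this
  exact Nat.dvd_antisymm h1 h2

lemma perm_mem_iff_of_maps_to {α : Type*} [DecidableEq α] [Fintype α] (σ : Perm α)
    {s : Finset α} (h : ∀ y ∈ s, σ y ∈ s) : ∀ y, y ∈ s ↔ σ y ∈ s := by
  have himg : s.image ⇑σ = s := by
    apply Finset.eq_of_subset_of_card_le
    · intro z hz
      rcases Finset.mem_image.1 hz with ⟨y, hy, rfl⟩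
      exact h y hy
    · rw [Finset.card_image_of_injective _ σ.injective]
  intro y
  constructor
  · exact h y
  · intro hy
    rw [← himg] at hy
    rcases Finset.mem_image.1 hy with ⟨z, hz, hzy⟩
    rwa [← σ.injective hzy]

lemma perm_mem_compl_iff_of_maps_to {α : Type*} [DecidableEq α] [Fintype α] (σ : Perm α)
    {s : Finset α} (h : ∀ y ∈ s, σ y ∈ s) : ∀ y, y ∈ sᶜ ↔ σ y ∈ sᶜ := by
  intro y
  rw [Finset.mem_compl, Finset.mem_compl, not_iff_not]
  exact perm_mem_iff_of_maps_to σ h y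

section Core

variable {n j' : ℕ}

/-- the image set of an embedding -/
def oSet (g : Fin (j' + 1) ↪ Fin n) : Finset (Fin n) := univ.map g

lemma mem_oSet {g : Fin (j' + 1) ↪ Fin n} {y : Fin n} :
    y ∈ oSet g ↔ ∃ k, g k = y := by simp [oSet]

lemma oSet_card (g : Fin (j' + 1) ↪ Fin n) : (oSet g).card = j' + 1 := by
  simp [oSet]

lemma oSet_compl_card (g : Fin (j' + 1) ↪ Fin n) : ((oSet g)ᶜ).card = n - (j' + 1) := by
  rw [Finset.card_compl, oSet_card, Fintype.card_fin]

/-- order isomorphism enumerating the complement of the image -/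
noncomputable def oEquiv (g : Fin (j' + 1) ↪ Fin n) :
    Fin (n - (j' + 1)) ≃ ((oSet g)ᶜ : Finset (Fin n)) :=
  (((oSet g)ᶜ).orderIsoOfFin (oSet_compl_card g)).toEquiv

/-- the permutation induced on the complement of the image, transported to `Fin (n-j)` -/
noncomputable def offPerm (σ : Perm (Fin n)) (g : Fin (j' + 1) ↪ Fin n)
    (h : ∀ y, y ∈ (oSet g)ᶜ ↔ σ y ∈ (oSet g)ᶜ) : Perm (Fin (n - (j' + 1))) :=
  (oEquiv g).symm.permCongr (σ.subtypePerm (fun y => (h y).symm))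

lemma offPerm_congr {σ : Perm (Fin n)} {g g' : Fin (j' + 1) ↪ Fin n} (hgg : g = g')
    {h : ∀ y, y ∈ (oSet g)ᶜ ↔ σ y ∈ (oSet g)ᶜ} {h' : ∀ y, y ∈ (oSet g')ᶜ ↔ σ y ∈ (oSet g')ᶜ} :
    offPerm σ g h = offPerm σ g' h' := by subst hgg; rfl

/-- the equivalence between `Fin j` and the image set -/
noncomputable def ucl (g : Fin (j' + 1) ↪ Fin n) : Fin (j' + 1) ≃ (oSet g : Finset (Fin n)) :=
  Equiv.ofBijective (fun k => ⟨g k, mem_oSet.2 ⟨k, rfl⟩⟩)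
    (by
      rw [Fintype.bijective_iff_injective_and_card]
      constructor
      · intro k k' hkk'
        exact g.injective (Subtype.ext_iff.1 hkk')
      · rw [Fintype.card_coe, oSet_card, Fintype.card_fin])

lemma ucl_apply (g : Fin (j' + 1) ↪ Fin n) (k : Fin (j' + 1)) :
    ((ucl g k : Fin n)) = g k := rfl

/-- the full cycle supported on the image of `g` -/
noncomputable def cycPerm (g : Fin (j' + 1) ↪ Fin n) : Perm (Fin n) :=
  ofSubtype ((ucl g).permCongr (finRotate (j' + 1)))

lemma cycPerm_apply_mem (g : Fin (j' + 1) ↪ Fin n) (k : Fin (j' + 1)) :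
    cycPerm g (g k) = g (finRotate (j' + 1) k) := by
  rw [cycPerm, ofSubtype_apply_of_mem _ (mem_oSet.2 ⟨k, rfl⟩)]
  have hsymm : (ucl g).symm ⟨g k, mem_oSet.2 ⟨k, rfl⟩⟩ = k := by
    rw [Equiv.symm_apply_eq]
    rfl
  rw [Equiv.permCongr_apply, hsymm, ucl_apply]

lemma cycPerm_apply_not_mem (g : Fin (j' + 1) ↪ Fin n) {y : Fin n} (hy : y ∉ oSet g) :
    cycPerm g y = y :=
  ofSubtype_apply_of_not_mem _ hy

/-- the permutation built from a cycle on the image of `g` and `τ` off it -/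
noncomputable def bwdPerm (g : Fin (j' + 1) ↪ Fin n) (τ : Perm (Fin (n - (j' + 1)))) :
    Perm (Fin n) :=
  cycPerm g * ofSubtype ((oEquiv g).permCongr τ)

lemma bwdPerm_apply_mem (g : Fin (j' + 1) ↪ Fin n) (τ : Perm (Fin (n - (j' + 1))))
    (k : Fin (j' + 1)) : bwdPerm g τ (g k) = g (finRotate (j' + 1) k) := by
  have h1 : ofSubtype ((oEquiv g).permCongr τ) (g k) = g k :=
    ofSubtype_apply_of_not_mem _ (by simp [Finset.mem_compl, mem_oSet.2 ⟨k, rfl⟩])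
  rw [bwdPerm, Equiv.Perm.mul_apply, h1, cycPerm_apply_mem]

lemma bwdPerm_apply_not_mem (g : Fin (j' + 1) ↪ Fin n) (τ : Perm (Fin (n - (j' + 1))))
    {y : Fin n} (hy : y ∈ (oSet g)ᶜ) :
    bwdPerm g τ y = (((oEquiv g).permCongr τ) ⟨y, hy⟩ : Fin n) := by
  have h1 : ofSubtype ((oEquiv g).permCongr τ) y = (((oEquiv g).permCongr τ) ⟨y, hy⟩ : Fin n) :=
    ofSubtype_apply_of_mem _ hy
  rw [bwdPerm, Equiv.Perm.mul_apply, h1, cycPerm_apply_not_mem]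
  exact Finset.mem_compl.1 ((((oEquiv g).permCongr τ) ⟨y, hy⟩)).2

lemma bwdPerm_maps_to (g : Fin (j' + 1) ↪ Fin n) (τ : Perm (Fin (n - (j' + 1)))) :
    ∀ y ∈ oSet g, bwdPerm g τ y ∈ oSet g := by
  intro y hy
  rcases mem_oSet.1 hy with ⟨k, rfl⟩
  rw [bwdPerm_apply_mem]
  exact mem_oSet.2 ⟨_, rfl⟩

lemma bwdPerm_inv (g : Fin (j' + 1) ↪ Fin n) (τ : Perm (Fin (n - (j' + 1)))) :
    ∀ y, y ∈ (oSet g)ᶜ ↔ bwdPerm g τ y ∈ (oSet g)ᶜ :=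
  perm_mem_compl_iff_of_maps_to _ (bwdPerm_maps_to g τ)

lemma offPerm_bwdPerm (g : Fin (j' + 1) ↪ Fin n) (τ : Perm (Fin (n - (j' + 1))))
    (h : ∀ y, y ∈ (oSet g)ᶜ ↔ bwdPerm g τ y ∈ (oSet g)ᶜ) :
    offPerm (bwdPerm g τ) g h = τ := by
  apply Equiv.ext
  intro z
  rw [offPerm, Equiv.permCongr_apply, Equiv.symm_symm, Equiv.symm_apply_eq]
  apply Subtype.ext
  have h2 := bwdPerm_apply_not_mem g τ (oEquiv g z).2
  have h3 : (⟨((oEquiv g z : Fin n)), (oEquiv g z).2⟩ : {y // y ∈ (oSet g)ᶜ}) = oEquiv g z :=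
    Subtype.ext rfl
  show bwdPerm g τ ((oEquiv g z : Fin n)) = ((oEquiv g (τ z) : Fin n))
  rw [h2, h3, Equiv.permCongr_apply, Equiv.symm_apply_apply]


lemma bwdPerm_period_mem (g : Fin (j' + 1) ↪ Fin n) (τ : Perm (Fin (n - (j' + 1))))
    (k : Fin (j' + 1)) :
    minimalPeriod ⇑(bwdPerm g τ) (g k) = j' + 1 := by
  have hagree : ∀ y ∈ (oSet g : Set (Fin n)), bwdPerm g τ y = cycPerm g y := by
    intro y hy
    rcases mem_oSet.1 hy with ⟨k', rfl⟩
    rw [bwdPerm_apply_mem, cycPerm_apply_mem]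
  have hmaps : ∀ y ∈ (oSet g : Set (Fin n)), bwdPerm g τ y ∈ (oSet g : Set (Fin n)) := by
    intro y hy
    exact bwdPerm_maps_to g τ y hy
  rw [minimalPeriod_congr_set hagree hmaps (mem_oSet.2 ⟨k, rfl⟩)]
  rw [cycPerm, minimalPeriod_ofSubtype _ (mem_oSet.2 ⟨k, rfl⟩)]
  have : (⟨g k, mem_oSet.2 ⟨k, rfl⟩⟩ : (oSet g : Finset (Fin n))) = ucl g k := rfl
  rw [this, minimalPeriod_permCongr, minimalPeriod_finRotate]

lemma bwdPerm_period_not_mem (g : Fin (j' + 1) ↪ Fin n) (τ : Perm (Fin (n - (j' + 1))))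
    {y : Fin n} (hy : y ∈ (oSet g)ᶜ) :
    minimalPeriod ⇑(bwdPerm g τ) y = minimalPeriod ⇑τ ((oEquiv g).symm ⟨y, hy⟩) := by
  have hagree : ∀ z ∈ {y : Fin n | y ∈ (oSet g)ᶜ},
      bwdPerm g τ z = ofSubtype ((oEquiv g).permCongr τ) z := by
    intro z hz
    rw [bwdPerm_apply_not_mem g τ hz]
    exact (ofSubtype_apply_of_mem _ hz).symm
  have hmaps : ∀ z ∈ {y : Fin n | y ∈ (oSet g)ᶜ}, bwdPerm g τ z ∈ {y : Fin n | y ∈ (oSet g)ᶜ} := by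
    intro z hz
    have := (bwdPerm_inv g τ z).1 hz
    exact this
  rw [minimalPeriod_congr_set hagree hmaps hy]
  rw [minimalPeriod_ofSubtype _ hy]
  have hrw : (⟨y, hy⟩ : {z // z ∈ (oSet g)ᶜ}) = oEquiv g ((oEquiv g).symm ⟨y, hy⟩) := by
    rw [Equiv.apply_symm_apply]
  conv_lhs => rw [hrw]
  exact minimalPeriod_permCongr _ _ _

/-- the orbit embedding of a point of period `j'+1` -/
noncomputable def orbEmb (σ : Perm (Fin n)) (x : Fin n)
    (hper : minimalPeriod ⇑σ x = j' + 1) : Fin (j' + 1) ↪ Fin n :=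
  ⟨fun k => (⇑σ)^[k.val] x, by
    intro k k' hkk'
    have h1 : (k : ℕ) ∈ Set.Iio (minimalPeriod ⇑σ x) := by rw [hper]; exact k.isLt
    have h2 : (k' : ℕ) ∈ Set.Iio (minimalPeriod ⇑σ x) := by rw [hper]; exact k'.isLt
    exact Fin.ext (iterate_injOn_Iio_minimalPeriod h1 h2 hkk')⟩

lemma orbEmb_apply (σ : Perm (Fin n)) (x : Fin n) (hper : minimalPeriod ⇑σ x = j' + 1)
    (k : Fin (j' + 1)) : orbEmb σ x hper k = (⇑σ)^[k.val] x := rfl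

lemma orbEmb_apply_perm (σ : Perm (Fin n)) (x : Fin n) (hper : minimalPeriod ⇑σ x = j' + 1)
    (k : Fin (j' + 1)) :
    σ (orbEmb σ x hper k) = orbEmb σ x hper (finRotate (j' + 1) k) := by
  have h0 : σ ((⇑σ)^[(k : ℕ)] x) = (⇑σ)^[(k : ℕ) + 1] x := (iterate_succ_apply' ⇑σ _ x).symm
  rw [orbEmb_apply, orbEmb_apply, h0, finRotate_succ_apply]
  by_cases hk : (k : ℕ) + 1 < j' + 1
  · have : ((k + 1 : Fin (j' + 1)) : ℕ) = (k : ℕ) + 1 := by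
      rw [Fin.val_add_one_of_lt]
      rw [Fin.lt_iff_val_lt_val, Fin.val_last]
      omega
    rw [this]
  · have hk' : (k : ℕ) + 1 = j' + 1 := by have := k.isLt; omega
    have hlast : k = Fin.last j' := by
      apply Fin.ext
      rw [Fin.val_last]
      omega
    have : (k + 1 : Fin (j' + 1)) = 0 := by
      rw [hlast, Fin.last_add_one]
    have hx0 : (⇑σ)^[j' + 1] x = x := by
      rw [← hper]
      exact iterate_minimalPeriod
    rw [this, hk', hx0]
    rfl

lemma orbEmb_maps_to (σ : Perm (Fin n)) (x : Fin n) (hper : minimalPeriod ⇑σ x = j' + 1) :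
    ∀ y ∈ oSet (orbEmb σ x hper), σ y ∈ oSet (orbEmb σ x hper) := by
  intro y hy
  rcases mem_oSet.1 hy with ⟨k, rfl⟩
  rw [orbEmb_apply_perm]
  exact mem_oSet.2 ⟨_, rfl⟩

lemma orbEmb_inv (σ : Perm (Fin n)) (x : Fin n) (hper : minimalPeriod ⇑σ x = j' + 1) :
    ∀ y, y ∈ (oSet (orbEmb σ x hper))ᶜ ↔ σ y ∈ (oSet (orbEmb σ x hper))ᶜ :=
  perm_mem_compl_iff_of_maps_to _ (orbEmb_maps_to σ x hper)

lemma orbEmb_period (σ : Perm (Fin n)) (x : Fin n) (hper : minimalPeriod ⇑σ x = j' + 1)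
    (k : Fin (j' + 1)) : minimalPeriod ⇑σ (orbEmb σ x hper k) = j' + 1 := by
  rw [orbEmb_apply, minimalPeriod_apply_iterate (perm_mem_periodicPts σ x), hper]

lemma offPerm_period (σ : Perm (Fin n)) (g : Fin (j' + 1) ↪ Fin n)
    (h : ∀ y, y ∈ (oSet g)ᶜ ↔ σ y ∈ (oSet g)ᶜ) (z : Fin (n - (j' + 1))) :
    minimalPeriod ⇑(offPerm σ g h) z = minimalPeriod ⇑σ ((oEquiv g z : Fin n)) := by
  have hz : z = (oEquiv g).symm (oEquiv g z) := (Equiv.symm_apply_apply _ _).symm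
  conv_lhs => rw [hz]
  rw [offPerm, minimalPeriod_permCongr ((oEquiv g).symm) _ (oEquiv g z),
    minimalPeriod_subtypePerm (h := h)]


noncomputable def smallSet (m k : ℕ) : Finset (Perm (Fin k)) :=
  univ.filter (fun σ => ∀ x, minimalPeriod ⇑σ x ≤ m)

noncomputable def smallCount (m k : ℕ) : ℕ := (smallSet m k).card

lemma mem_smallSet {m k : ℕ} {σ : Perm (Fin k)} :
    σ ∈ smallSet m k ↔ ∀ x, minimalPeriod ⇑σ x ≤ m := by
  simp [smallSet]

lemma fiber_card (m n j' : ℕ) (hjm : j' + 1 ≤ m) :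
    (((smallSet m n) ×ˢ (univ : Finset (Fin n))).filter
        (fun q : Perm (Fin n) × Fin n => minimalPeriod ⇑q.1 q.2 = j' + 1)).card
      = n.descFactorial (j' + 1) * smallCount m (n - (j' + 1)) := by
  have hT : n.descFactorial (j' + 1) * smallCount m (n - (j' + 1)) =
      ((univ : Finset (Fin (j' + 1) ↪ Fin n)) ×ˢ smallSet m (n - (j' + 1))).card := by
    rw [card_product, card_univ, Fintype.card_embedding_eq, Fintype.card_fin,
      Fintype.card_fin, smallCount]
  rw [hT]
  refine Finset.card_bij'
    (fun q hq => (orbEmb q.1 q.2 (Finset.mem_filter.1 hq).2,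
      offPerm q.1 (orbEmb q.1 q.2 (Finset.mem_filter.1 hq).2)
        (orbEmb_inv q.1 q.2 (Finset.mem_filter.1 hq).2)))
    (fun b _ => (bwdPerm b.1 b.2, b.1 0)) ?_ ?_ ?_ ?_
  · -- forward maps into target
    intro q hq
    have hsmall : ∀ x, minimalPeriod ⇑q.1 x ≤ m :=
      mem_smallSet.1 (Finset.mem_product.1 (Finset.mem_filter.1 hq).1).1
    refine Finset.mem_product.2 ⟨Finset.mem_univ _, mem_smallSet.2 ?_⟩
    intro z
    rw [offPerm_period]
    exact hsmall _
  · -- backward maps into source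
    intro b hb
    have hτ : ∀ z, minimalPeriod ⇑b.2 z ≤ m :=
      mem_smallSet.1 (Finset.mem_product.1 hb).2
    refine Finset.mem_filter.2 ⟨Finset.mem_product.2 ⟨mem_smallSet.2 ?_, Finset.mem_univ _⟩,
      bwdPerm_period_mem b.1 b.2 0⟩
    intro y
    by_cases hy : y ∈ oSet b.1
    · rcases mem_oSet.1 hy with ⟨k, rfl⟩
      rw [bwdPerm_period_mem]
      exact hjm
    · rw [bwdPerm_period_not_mem b.1 b.2 (Finset.mem_compl.2 hy)]
      exact hτ _
  · -- left inverse
    intro q hq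
    have hper := (Finset.mem_filter.1 hq).2
    rw [Prod.mk.injEq]
    constructor
    · apply Equiv.ext
      intro y
      by_cases hy : y ∈ oSet (orbEmb q.1 q.2 hper)
      · rcases mem_oSet.1 hy with ⟨k, rfl⟩
        rw [bwdPerm_apply_mem, ← orbEmb_apply_perm]
      · rw [bwdPerm_apply_not_mem _ _ (Finset.mem_compl.2 hy)]
        simp only [offPerm, Equiv.permCongr_apply, Equiv.symm_symm, Equiv.symm_apply_apply,
          Equiv.apply_symm_apply]
        rfl
    · rfl
  · -- right inverse
    intro b hb
    have hper : minimalPeriod ⇑(bwdPerm b.1 b.2) (b.1 0) = j' + 1 :=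
      bwdPerm_period_mem b.1 b.2 0
    have key : ∀ (K : ℕ) (hK : K < j' + 1),
        (⇑(bwdPerm b.1 b.2))^[K] (b.1 0) = b.1 ⟨K, hK⟩ := by
      intro K
      induction K with
      | zero => intro hK; rfl
      | succ K ih =>
        intro hK
        rw [iterate_succ_apply', ih (by omega)]
        rw [bwdPerm_apply_mem]
        congr 1
        rw [finRotate_succ_apply]
        apply Fin.ext
        rw [Fin.val_add_one_of_lt]
        rw [Fin.lt_iff_val_lt_val, Fin.val_last]
        show K < j'
        omega
    have hg : orbEmb (bwdPerm b.1 b.2) (b.1 0) hper = b.1 := by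
      apply DFunLike.ext
      intro k
      rw [orbEmb_apply]
      have := key k.val k.isLt
      rw [this]
    rw [Prod.mk.injEq]
    refine ⟨hg, ?_⟩
    exact (offPerm_congr (h' := bwdPerm_inv b.1 b.2) hg).trans
      (offPerm_bwdPerm b.1 b.2 (bwdPerm_inv b.1 b.2))

lemma smallCount_rec (m n : ℕ) (hn : 1 ≤ n) :
    n * smallCount m n = ∑ j ∈ Icc 1 m, n.descFactorial j * smallCount m (n - j) := by
  have h0 : (smallSet m n ×ˢ (univ : Finset (Fin n))).card = n * smallCount m n := by
    rw [card_product, card_univ, Fintype.card_fin, smallCount, mul_comm]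
  rw [← h0]
  have hfib : ∀ q ∈ smallSet m n ×ˢ (univ : Finset (Fin n)),
      (fun q : Perm (Fin n) × Fin n => minimalPeriod ⇑q.1 q.2) q ∈ Icc 1 m := by
    intro q hq
    refine Finset.mem_Icc.2 ⟨perm_minimalPeriod_pos q.1 q.2, ?_⟩
    exact mem_smallSet.1 (Finset.mem_product.1 hq).1 q.2
  rw [Finset.card_eq_sum_card_fiberwise hfib]
  apply Finset.sum_congr rfl
  intro j hj
  have hj1 : 1 ≤ j := (Finset.mem_Icc.1 hj).1
  obtain ⟨j', rfl⟩ : ∃ j'', j = j'' + 1 := ⟨j - 1, by omega⟩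
  exact fiber_card m n j' (Finset.mem_Icc.1 hj).2

end Core

noncomputable def nlcF (u : ℝ) : ℝ := Real.exp (-(u * Real.log u) + u - 1)

lemma nlcF_anti {w v : ℝ} (hw : 1 ≤ w) (hwv : w ≤ v) : nlcF v ≤ nlcF w := by
  have hw0 : (0:ℝ) < w := by linarith
  have hv0 : (0:ℝ) < v := by linarith
  have hlog : Real.log w - Real.log v ≤ w / v - 1 := by
    have h := Real.log_le_sub_one_of_pos (div_pos hw0 hv0)
    rwa [Real.log_div (ne_of_gt hw0) (ne_of_gt hv0)] at h
  have h1 : v * Real.log w - v * Real.log v ≤ w - v := by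
    have := mul_le_mul_of_nonneg_left hlog (le_of_lt hv0)
    have hv' : v * (w / v - 1) = w - v := by field_simp
    nlinarith
  have h2 : (0:ℝ) ≤ Real.log w := Real.log_nonneg hw
  apply Real.exp_le_exp.2
  nlinarith [mul_nonneg (sub_nonneg.2 hwv) h2]

lemma one_div_le_nlcF {u : ℝ} (h1 : 1 ≤ u) (he : u ≤ Real.exp 1) : 1 / u ≤ nlcF u := by
  have hu0 : (0:ℝ) < u := by linarith
  have hlog1 : Real.log u ≤ 1 := by
    rw [Real.log_le_iff_le_exp hu0]; exact he
  have : 1 / u = Real.exp (-(Real.log u)) := by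
    rw [Real.exp_neg, Real.exp_log hu0, one_div]
  rw [this]
  apply Real.exp_le_exp.2
  nlinarith [Real.log_nonneg h1]

lemma nlcF_step {u : ℝ} (h : 2 ≤ u) : nlcF (u - 1) / u ≤ nlcF u := by
  have hu0 : (0:ℝ) < u := by linarith
  have h10 : (0:ℝ) < u - 1 := by linarith
  have hlog : Real.log u - Real.log (u - 1) ≤ 1 / (u - 1) := by
    have hd := Real.log_le_sub_one_of_pos (div_pos hu0 h10)
    rw [Real.log_div (ne_of_gt hu0) (ne_of_gt h10)] at hd
    have : u / (u - 1) - 1 = 1 / (u - 1) := by field_simp; ring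
    linarith
  have hkey : (u - 1) * (Real.log u - Real.log (u - 1)) ≤ 1 := by
    have := mul_le_mul_of_nonneg_left hlog (le_of_lt h10)
    have h2 : (u - 1) * (1 / (u - 1)) = 1 := by field_simp
    linarith
  rw [div_le_iff₀ hu0]
  have : nlcF u * u = Real.exp (-(u * Real.log u) + u - 1 + Real.log u) := by
    rw [Real.exp_add, Real.exp_log hu0, nlcF]
  rw [this, nlcF]
  apply Real.exp_le_exp.2
  nlinarith


section Nu

noncomputable def nuSm (m k : ℕ) : ℝ := (smallCount m k : ℝ) / (k.factorial : ℝ)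

lemma smallCount_le_factorial (m k : ℕ) : smallCount m k ≤ k.factorial := by
  rw [smallCount]
  calc (smallSet m k).card ≤ (univ : Finset (Equiv.Perm (Fin k))).card :=
        Finset.card_le_card (Finset.filter_subset _ _)
    _ = k.factorial := by rw [Finset.card_univ, Fintype.card_perm, Fintype.card_fin]

lemma nuSm_nonneg (m k : ℕ) : 0 ≤ nuSm m k := by
  unfold nuSm
  positivity

lemma nuSm_le_one (m k : ℕ) : nuSm m k ≤ 1 := by
  rw [nuSm, div_le_one (by exact_mod_cast Nat.factorial_pos k)]
  exact_mod_cast smallCount_le_factorial m k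

lemma nuSm_rec (m n : ℕ) (hm : 1 ≤ m) (hmn : m ≤ n) :
    nuSm m n = (∑ j ∈ Icc 1 m, nuSm m (n - j)) / n := by
  have hn : 1 ≤ n := le_trans hm hmn
  have hn0 : (0:ℝ) < (n : ℝ) := by exact_mod_cast hn
  have hfac : (0:ℝ) < (n.factorial : ℝ) := by exact_mod_cast n.factorial_pos
  rw [eq_div_iff (ne_of_gt hn0)]
  have key : ((n : ℝ)) * (smallCount m n : ℝ)
      = ∑ j ∈ Icc 1 m, (n.descFactorial j : ℝ) * (smallCount m (n - j) : ℝ) := by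
    exact_mod_cast congrArg (Nat.cast (R := ℝ)) (smallCount_rec m n hn)
  have h2 : nuSm m n * n = ((n : ℝ) * (smallCount m n : ℝ)) / (n.factorial : ℝ) := by
    rw [nuSm]
    ring
  rw [h2, key, Finset.sum_div]
  apply Finset.sum_congr rfl
  intro j hj
  have hjn : j ≤ n := le_trans (Finset.mem_Icc.1 hj).2 hmn
  have hfs : ((n - j).factorial * n.descFactorial j : ℕ) = n.factorial :=
    Nat.factorial_mul_descFactorial hjn
  have hfsR : ((n - j).factorial : ℝ) * (n.descFactorial j : ℝ) = (n.factorial : ℝ) := by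
    exact_mod_cast congrArg (Nat.cast (R := ℝ)) hfs
  have hfj : (0:ℝ) < ((n - j).factorial : ℝ) := by exact_mod_cast (n - j).factorial_pos
  rw [nuSm, div_eq_div_iff (ne_of_gt hfac) (ne_of_gt hfj), ← hfsR]
  ring

lemma nuSm_le_nlcF (m : ℕ) (hm : 1 ≤ m) : ∀ n, m ≤ n → nuSm m n ≤ nlcF ((n : ℝ) / m) := by
  intro n
  induction n using Nat.strong_induction_on with
  | _ n ih =>
    intro hmn
    have hm0 : (0:ℝ) < (m : ℝ) := by exact_mod_cast hm
    have hn1 : 1 ≤ n := le_trans hm hmn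
    have hn0 : (0:ℝ) < (n : ℝ) := by exact_mod_cast hn1
    have hu1 : 1 ≤ (n : ℝ) / m := by
      rw [le_div_iff₀ hm0]
      simpa using (Nat.cast_le (α := ℝ)).2 hmn
    have hcard : #(Icc 1 m) = m := by
      rw [Nat.card_Icc]
      omega
    have hrec := nuSm_rec m n hm hmn
    by_cases hue : (n : ℝ) / m ≤ Real.exp 1
    · have hsum : ∑ j ∈ Icc 1 m, nuSm m (n - j) ≤ (m : ℝ) := by
        calc ∑ j ∈ Icc 1 m, nuSm m (n - j) ≤ #(Icc 1 m) • (1:ℝ) :=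
              Finset.sum_le_card_nsmul _ _ _ (fun j _ => nuSm_le_one m (n - j))
          _ = (m : ℝ) := by rw [hcard, nsmul_eq_mul, mul_one]
      have h1 : nuSm m n ≤ (m : ℝ) / n := by
        rw [hrec]
        exact (div_le_div_iff_of_pos_right hn0).2 hsum
      have h2 : (m : ℝ) / n = 1 / ((n : ℝ) / m) := by
        rw [one_div_div]
      calc nuSm m n ≤ (m : ℝ) / n := h1
        _ = 1 / ((n : ℝ) / m) := h2
        _ ≤ nlcF ((n : ℝ) / m) := one_div_le_nlcF hu1 hue
    · push_neg at hue
      have he2 : (2:ℝ) ≤ Real.exp 1 := by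
        have h := Real.exp_one_gt_d9
        norm_num at h
        linarith
      have hu2 : (2:ℝ) ≤ (n : ℝ) / m := le_trans he2 (le_of_lt hue)
      have h2m : 2 * m ≤ n := by
        have h2r : (2:ℝ) * m ≤ n := by
          rw [← le_div_iff₀ hm0]
          exact hu2
        exact_mod_cast h2r
      have hsum : ∑ j ∈ Icc 1 m, nuSm m (n - j) ≤ (m : ℝ) * nlcF ((n : ℝ) / m - 1) := by
        have hterm : ∀ j ∈ Icc 1 m, nuSm m (n - j) ≤ nlcF ((n : ℝ) / m - 1) := by
          intro j hj
          obtain ⟨hj1, hjm⟩ := Finset.mem_Icc.1 hj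
          have hmnj : m ≤ n - j := by omega
          have hlt : n - j < n := by omega
          have hle := ih (n - j) hlt hmnj
          refine le_trans hle (nlcF_anti ?_ ?_)
          · linarith
          · have hjn : j ≤ n := by omega
            have hcast : ((n - j : ℕ) : ℝ) = (n : ℝ) - j := Nat.cast_sub hjn
            have hjm' : (j : ℝ) ≤ (m : ℝ) := Nat.cast_le.2 hjm
            rw [hcast]
            calc (n : ℝ) / m - 1 = ((n : ℝ) - m) / m := by field_simp
              _ ≤ ((n : ℝ) - j) / m :=
                  (div_le_div_iff_of_pos_right hm0).2 (by linarith)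
        calc ∑ j ∈ Icc 1 m, nuSm m (n - j) ≤ #(Icc 1 m) • nlcF ((n : ℝ) / m - 1) :=
              Finset.sum_le_card_nsmul _ _ _ hterm
          _ = (m : ℝ) * nlcF ((n : ℝ) / m - 1) := by rw [hcard, nsmul_eq_mul]
      have h1 : nuSm m n ≤ ((m : ℝ) * nlcF ((n : ℝ) / m - 1)) / n := by
        rw [hrec]
        exact (div_le_div_iff_of_pos_right hn0).2 hsum
      have h2 : ((m : ℝ) * nlcF ((n : ℝ) / m - 1)) / n = nlcF ((n : ℝ) / m - 1) / ((n : ℝ) / m) := by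
        rw [div_div_eq_mul_div]
        rw [mul_comm]
      calc nuSm m n ≤ ((m : ℝ) * nlcF ((n : ℝ) / m - 1)) / n := h1
        _ = nlcF ((n : ℝ) / m - 1) / ((n : ℝ) / m) := h2
        _ ≤ nlcF ((n : ℝ) / m) := nlcF_step hu2

end Nu


lemma cycleCountIn_eq_zero_iff {n m : ℕ} (σ : Equiv.Perm (Fin n)) :
    cycleCountIn σ (Finset.Icc (m + 1) n) = 0 ↔ ∀ x, minimalPeriod ⇑σ x ≤ m := by
  constructor
  · intro h x
    by_contra hx
    push_neg at hx
    rw [cycleCountIn] at h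
    have hinj : Set.InjOn (fun k => (⇑σ)^[k] x) ↑(Finset.range (minimalPeriod ⇑σ x)) := by
      intro a ha b hb hab
      exact iterate_injOn_Iio_minimalPeriod
        (by simpa using (Finset.mem_range.1 (Finset.mem_coe.1 ha)))
        (by simpa using (Finset.mem_range.1 (Finset.mem_coe.1 hb))) hab
    have hcard : ((Finset.range (minimalPeriod ⇑σ x)).image fun k => (⇑σ)^[k] x).card
        = minimalPeriod ⇑σ x := by
      rw [Finset.card_image_of_injOn hinj, Finset.card_range]
    have hsub : ((Finset.range (minimalPeriod ⇑σ x)).image fun k => (⇑σ)^[k] x) ⊆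
        Finset.univ.filter (fun y => minimalPeriod ⇑σ y = minimalPeriod ⇑σ x) := by
      intro y hy
      rcases Finset.mem_image.1 hy with ⟨k, _, rfl⟩
      refine Finset.mem_filter.2 ⟨Finset.mem_univ _, ?_⟩
      rw [minimalPeriod_apply_iterate (perm_mem_periodicPts σ x)]
    have hple : minimalPeriod ⇑σ x
        ≤ (Finset.univ.filter (fun y => minimalPeriod ⇑σ y = minimalPeriod ⇑σ x)).card := by
      calc minimalPeriod ⇑σ x
          = ((Finset.range (minimalPeriod ⇑σ x)).image fun k => (⇑σ)^[k] x).card := hcard.symm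
        _ ≤ _ := Finset.card_le_card hsub
    have hpn : minimalPeriod ⇑σ x ≤ n := by
      calc minimalPeriod ⇑σ x
          ≤ (Finset.univ.filter (fun y => minimalPeriod ⇑σ y = minimalPeriod ⇑σ x)).card := hple
        _ ≤ (Finset.univ : Finset (Fin n)).card := Finset.card_le_card (Finset.filter_subset _ _)
        _ = n := by rw [Finset.card_univ, Fintype.card_fin]
    have hpos : 0 < minimalPeriod ⇑σ x := perm_minimalPeriod_pos σ x
    have hone : 1 ≤ cycleCount σ (minimalPeriod ⇑σ x) := by
      rw [cycleCount, Nat.le_div_iff_mul_le hpos, one_mul]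
      exact hple
    have hmem : minimalPeriod ⇑σ x ∈ Finset.Icc (m + 1) n :=
      Finset.mem_Icc.2 ⟨by omega, hpn⟩
    have := (Finset.sum_eq_zero_iff.1 h) (minimalPeriod ⇑σ x) hmem
    omega
  · intro h
    rw [cycleCountIn]
    apply Finset.sum_eq_zero
    intro j hj
    have hj1 : m + 1 ≤ j := (Finset.mem_Icc.1 hj).1
    rw [cycleCount]
    have hemp : (Finset.univ.filter fun x => minimalPeriod ⇑σ x = j) = ∅ := by
      rw [Finset.filter_eq_empty_iff]
      intro x _
      have := h x
      omega
    rw [hemp, Finset.card_empty, Nat.zero_div]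

lemma permP_eq (n m : ℕ) :
    permP n (fun σ => cycleCountIn σ (Finset.Icc (m + 1) n) = 0) = nuSm m n := by
  rw [permP, nuSm]
  congr 2
  rw [Nat.card_eq_fintype_card, Fintype.card_subtype, smallCount, smallSet]
  congr 1
  apply Finset.filter_congr
  intro σ _
  exact cycleCountIn_eq_zero_iff σ

/-- **Permutations without large cycles.** For `1 ≤ m ≤ n`, the probability
that a random `σ ∈ Sₙ` has no cycle of length greater than `m` is at most
`e^{-u log u + u - 1}`, where `u = n/m`. -/
theorem no_large_cycles_bound (n m : ℕ) (hm : 1 ≤ m) (hmn : m ≤ n) :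
    permP n (fun σ => cycleCountIn σ (Finset.Icc (m + 1) n) = 0)
      ≤ Real.exp (-(((n : ℝ) / m) * Real.log ((n : ℝ) / m)) + (n : ℝ) / m - 1) := by
  have h := nuSm_le_nlcF m hm n hmn
  rw [permP_eq n m]
  simpa only [nlcF] using h
end

section
/- For all integers m, n with n/2 ≤ m ≤ n, the probability that a uniformly random σ ∈ S_n has no cycle of length greater than m equals 1 − (H_n − H_m); that is, ν(n,m) = 1 − Σ_{k=m+1}^{n} 1/k. -/
open Finset

open Finset

section Aux
open Equiv Function

private lemma perm_iterate {n : ℕ} (σ : Equiv.Perm (Fin n)) (x : Fin n) (i : ℕ) :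
    (⇑σ)^[i] x = (σ ^ i) x := by rw [← Equiv.Perm.iterate_eq_pow]

private lemma perm_periodicPts {n : ℕ} (σ : Equiv.Perm (Fin n)) (x : Fin n) :
    x ∈ periodicPts ⇑σ := by
  refine ⟨orderOf σ, orderOf_pos σ, ?_⟩
  show (⇑σ)^[orderOf σ] x = x
  rw [perm_iterate, pow_orderOf_eq_one]
  rfl

private lemma mp_pos {n : ℕ} (σ : Equiv.Perm (Fin n)) (x : Fin n) :
    0 < minimalPeriod ⇑σ x := by
  obtain ⟨k, hk, hpt⟩ := perm_periodicPts σ x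
  exact hpt.minimalPeriod_pos hk

private lemma conj_iterate {n : ℕ} (π ρ : Equiv.Perm (Fin n)) (y : Fin n) (i : ℕ) :
    (⇑(π * ρ * π⁻¹))^[i] (π y) = π ((⇑ρ)^[i] y) := by
  induction i with
  | zero => rfl
  | succ i ih =>
    rw [Function.iterate_succ_apply', Function.iterate_succ_apply', ih]
    simp [Equiv.Perm.mul_apply]

private lemma mp_conj {n : ℕ} (π σ : Equiv.Perm (Fin n)) (x : Fin n) :
    minimalPeriod ⇑(π * σ * π⁻¹) (π x) = minimalPeriod ⇑σ x := by
  have key : ∀ (π σ : Equiv.Perm (Fin n)) (x : Fin n),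
      minimalPeriod ⇑(π * σ * π⁻¹) (π x) ≤ minimalPeriod ⇑σ x := by
    intro π σ x
    have hfix : (⇑σ)^[minimalPeriod ⇑σ x] x = x := isPeriodicPt_minimalPeriod ⇑σ x
    have h1 : IsPeriodicPt ⇑(π * σ * π⁻¹) (minimalPeriod ⇑σ x) (π x) := by
      show (⇑(π * σ * π⁻¹))^[minimalPeriod ⇑σ x] (π x) = π x
      rw [conj_iterate, hfix]
    exact h1.minimalPeriod_le (mp_pos σ x)
  refine le_antisymm (key π σ x) ?_
  have h := key π⁻¹ (π * σ * π⁻¹) (π x)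
  have e1 : π⁻¹ * (π * σ * π⁻¹) * π⁻¹⁻¹ = σ := by group
  have e2 : π⁻¹ (π x) = x := by simp
  rwa [e1, e2] at h

private noncomputable def orbitF {n : ℕ} (σ : Equiv.Perm (Fin n)) (x : Fin n) : Finset (Fin n) :=
  (Finset.range (minimalPeriod ⇑σ x)).image fun i => (⇑σ)^[i] x

private lemma orbitF_card {n : ℕ} (σ : Equiv.Perm (Fin n)) (x : Fin n) :
    (orbitF σ x).card = minimalPeriod ⇑σ x := by
  rw [orbitF, Finset.card_image_of_injOn, Finset.card_range]
  intro a ha b hb hab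
  exact iterate_injOn_Iio_minimalPeriod (by simpa using ha) (by simpa using hb) hab

private lemma orbitF_mp {n : ℕ} {σ : Equiv.Perm (Fin n)} {x y : Fin n} (hy : y ∈ orbitF σ x) :
    minimalPeriod ⇑σ y = minimalPeriod ⇑σ x := by
  obtain ⟨i, _, rfl⟩ := Finset.mem_image.1 hy
  exact minimalPeriod_apply_iterate (perm_periodicPts σ x) i

private lemma iterate_mem_orbitF {n : ℕ} (σ : Equiv.Perm (Fin n)) (x : Fin n) (a : ℕ) :
    (⇑σ)^[a] x ∈ orbitF σ x := by
  have hk := mp_pos σ x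
  have hper : IsPeriodicPt ⇑σ (minimalPeriod ⇑σ x) x := isPeriodicPt_minimalPeriod ⇑σ x
  exact Finset.mem_image.2 ⟨a % minimalPeriod ⇑σ x,
    Finset.mem_range.2 (Nat.mod_lt _ hk), hper.iterate_mod_apply a⟩

private lemma orbitF_subset_filter {n : ℕ} (σ : Equiv.Perm (Fin n)) (x : Fin n) {k : ℕ}
    (hx : minimalPeriod ⇑σ x = k) :
    orbitF σ x ⊆ Finset.univ.filter fun y => minimalPeriod ⇑σ y = k := by
  intro y hy
  exact Finset.mem_filter.2 ⟨Finset.mem_univ _, by rw [orbitF_mp hy, hx]⟩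

private lemma filter_point_card {n : ℕ} (σ : Equiv.Perm (Fin n)) {k : ℕ} (h2 : n < 2 * k)
    (x : Fin n) (hx : minimalPeriod ⇑σ x = k) :
    (Finset.univ.filter fun y => minimalPeriod ⇑σ y = k).card = k := by
  have hk : 0 < k := hx ▸ mp_pos σ x
  have hsub := orbitF_subset_filter σ x hx
  have hsup : (Finset.univ.filter fun y => minimalPeriod ⇑σ y = k) ⊆ orbitF σ x := by
    intro y hy
    have hyk : minimalPeriod ⇑σ y = k := (Finset.mem_filter.1 hy).2
    have hnd : ¬ Disjoint (orbitF σ x) (orbitF σ y) := by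
      intro hd
      have hcu : (orbitF σ x ∪ orbitF σ y).card = k + k := by
        rw [Finset.card_union_of_disjoint hd, orbitF_card, orbitF_card, hx, hyk]
      have hle : (orbitF σ x ∪ orbitF σ y).card ≤ n := by
        have := Finset.card_le_card (Finset.subset_univ (orbitF σ x ∪ orbitF σ y))
        simpa using this
      omega
    obtain ⟨z, hzx, hzy⟩ := Finset.not_disjoint_iff.1 hnd
    obtain ⟨j, hj, hjz⟩ := Finset.mem_image.1 hzy
    rw [Finset.mem_range, hyk] at hj
    obtain ⟨i, _, hiz⟩ := Finset.mem_image.1 hzx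
    have hpy : IsPeriodicPt ⇑σ k y := hyk ▸ isPeriodicPt_minimalPeriod ⇑σ y
    have hyz : (⇑σ)^[k - j] z = y := by
      rw [← hjz, ← Function.iterate_add_apply, Nat.sub_add_cancel (le_of_lt hj)]
      exact hpy
    rw [← hyz, ← hiz, ← Function.iterate_add_apply]
    exact iterate_mem_orbitF σ x _
  rw [Finset.Subset.antisymm hsup hsub, orbitF_card, hx]

private lemma mp_decomposeFin_zero {N : ℕ} (e : Equiv.Perm (Fin N)) :
    minimalPeriod ⇑(Equiv.Perm.decomposeFin.symm ((0 : Fin (N+1)), e)) 0 = 1 := by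
  rw [minimalPeriod_eq_one_iff_isFixedPt]
  show Equiv.Perm.decomposeFin.symm ((0 : Fin (N+1)), e) 0 = 0
  simp

private lemma mp_decomposeFin_succ {N : ℕ} (q : Fin N) (e : Equiv.Perm (Fin N)) :
    minimalPeriod ⇑(Equiv.Perm.decomposeFin.symm (q.succ, e)) (0 : Fin (N+1))
      = minimalPeriod ⇑e q + 1 := by
  have hσ0 : Equiv.Perm.decomposeFin.symm (q.succ, e) (0 : Fin (N+1)) = q.succ := by simp
  have hℓpos : 0 < minimalPeriod ⇑e q := mp_pos e q
  set σ : Equiv.Perm (Fin (N+1)) := Equiv.Perm.decomposeFin.symm (q.succ, e) with hσ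
  set ℓ : ℕ := minimalPeriod ⇑e q with hℓ
  have step : ∀ i, i < ℓ → (⇑σ)^[i+1] (0 : Fin (N+1)) = ((⇑e)^[i] q).succ := by
    intro i
    induction i with
    | zero =>
      intro _
      simpa using hσ0
    | succ i ih =>
      intro hi
      have hiℓ : i < ℓ := Nat.lt_of_succ_lt hi
      have h1 : (⇑σ)^[i+1+1] (0 : Fin (N+1)) = σ (((⇑e)^[i] q).succ) := by
        rw [Function.iterate_succ_apply', ih hiℓ]
      have hne : (⇑e)^[i+1] q ≠ q := by
        intro h
        have hP : IsPeriodicPt ⇑e (i+1) q := h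
        have := hP.minimalPeriod_le (Nat.succ_pos i)
        omega
      rw [h1, hσ, Equiv.Perm.decomposeFin_symm_apply_succ,
        ← Function.iterate_succ_apply' ⇑e i q]
      exact Equiv.swap_apply_of_ne_of_ne (Fin.succ_ne_zero _)
        (fun h => hne (Fin.succ_injective _ h))
  have hper : IsPeriodicPt ⇑σ (ℓ + 1) (0 : Fin (N+1)) := by
    show (⇑σ)^[ℓ+1] (0 : Fin (N+1)) = 0
    obtain ⟨j, hj⟩ : ∃ j, ℓ = j + 1 := ⟨ℓ - 1, by omega⟩
    have hq : (⇑e)^[j+1] q = q := by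
      have h := isPeriodicPt_minimalPeriod ⇑e q
      have h' : (⇑e)^[ℓ] q = q := h
      rwa [hj] at h'
    rw [hj, Function.iterate_succ_apply', step j (by omega), hσ,
      Equiv.Perm.decomposeFin_symm_apply_succ, ← Function.iterate_succ_apply' ⇑e j q,
      hq, Equiv.swap_apply_right]
  have hub : minimalPeriod ⇑σ 0 ≤ ℓ + 1 := hper.minimalPeriod_le (Nat.succ_pos ℓ)
  have hlb : ¬ minimalPeriod ⇑σ 0 ≤ ℓ := by
    intro hle
    have hd := mp_pos σ 0
    have hfix : (⇑σ)^[minimalPeriod ⇑σ 0] (0 : Fin (N+1)) = 0 :=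
      isPeriodicPt_minimalPeriod ⇑σ 0
    obtain ⟨c, hc⟩ : ∃ c, minimalPeriod ⇑σ 0 = c + 1 := ⟨_, (Nat.succ_pred_eq_of_pos hd).symm⟩
    rw [hc, step c (by omega)] at hfix
    exact Fin.succ_ne_zero _ hfix
  omega

end Aux
section Aux2
open Equiv Function

private lemma count_point_eq {n : ℕ} (k : ℕ) (x y : Fin n) :
    (Finset.univ.filter fun σ : Equiv.Perm (Fin n) => minimalPeriod ⇑σ x = k).card
      = (Finset.univ.filter fun σ : Equiv.Perm (Fin n) => minimalPeriod ⇑σ y = k).card := by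
  set π : Equiv.Perm (Fin n) := Equiv.swap x y with hπ
  have hπinv : π⁻¹ = π := Equiv.swap_inv x y
  refine Finset.card_bij' (fun σ _ => π * σ * π⁻¹) (fun τ _ => π⁻¹ * τ * π) ?_ ?_ ?_ ?_
  · intro σ hσ
    have hσk : minimalPeriod ⇑σ x = k := (Finset.mem_filter.1 hσ).2
    refine Finset.mem_filter.2 ⟨Finset.mem_univ _, ?_⟩
    show minimalPeriod ⇑(π * σ * π⁻¹) y = k
    have hy : y = π x := (Equiv.swap_apply_left x y).symm
    rw [hy, mp_conj, hσk]
  · intro τ hτ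
    have hτk : minimalPeriod ⇑τ y = k := (Finset.mem_filter.1 hτ).2
    refine Finset.mem_filter.2 ⟨Finset.mem_univ _, ?_⟩
    show minimalPeriod ⇑(π⁻¹ * τ * π) x = k
    have hx : x = π⁻¹ y := by rw [hπinv]; exact (Equiv.swap_apply_right x y).symm
    have heq : π⁻¹ * τ * π = π⁻¹ * τ * π⁻¹⁻¹ := by rw [inv_inv]
    rw [hx, heq, mp_conj, hτk]
  · intro σ _; group
  · intro τ _; group

private lemma count_mp : ∀ (n k : ℕ), 1 ≤ k → k ≤ n → ∀ x : Fin n,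
    (Finset.univ.filter fun σ : Equiv.Perm (Fin n) => minimalPeriod ⇑σ x = k).card
      = (n - 1).factorial := by
  intro n
  induction n with
  | zero => intro k h1 h2 x; omega
  | succ N ih =>
    intro k hk1 hkn x
    rw [count_point_eq k x 0]
    have hsum : (Finset.univ.filter
          fun σ : Equiv.Perm (Fin (N+1)) => minimalPeriod ⇑σ 0 = k).card
        = ∑ p : Fin (N+1), (Finset.univ.filter fun e : Equiv.Perm (Fin N) =>
            minimalPeriod ⇑(Equiv.Perm.decomposeFin.symm (p, e)) 0 = k).card := by
      rw [Finset.univ_perm_fin_succ, Finset.filter_map, Finset.card_map, Finset.card_filter,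
        ← Finset.univ_product_univ, Finset.sum_product]
      refine Finset.sum_congr rfl fun p _ => ?_
      rw [Finset.card_filter]
      refine Finset.sum_congr rfl fun e _ => ?_
      simp [Function.comp]
    rw [hsum, Fin.sum_univ_succ]
    rcases eq_or_lt_of_le hk1 with hk | hk
    · -- k = 1
      have hk' : k = 1 := hk.symm
      subst hk'
      have h0 : (Finset.univ.filter fun e : Equiv.Perm (Fin N) =>
          minimalPeriod ⇑(Equiv.Perm.decomposeFin.symm ((0 : Fin (N+1)), e)) 0 = 1).card
          = N.factorial := by
        simp only [mp_decomposeFin_zero]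
        simp [Finset.card_univ, Fintype.card_perm]
      have hq : ∀ q : Fin N, (Finset.univ.filter fun e : Equiv.Perm (Fin N) =>
          minimalPeriod ⇑(Equiv.Perm.decomposeFin.symm (q.succ, e)) 0 = 1).card = 0 := by
        intro q
        simp only [mp_decomposeFin_succ]
        rw [Finset.card_eq_zero, Finset.filter_eq_empty_iff]
        intro e _
        have := mp_pos e q
        omega
      simp only [hq]
      rw [h0]
      simp
    · -- k ≥ 2
      have h0 : (Finset.univ.filter fun e : Equiv.Perm (Fin N) =>
          minimalPeriod ⇑(Equiv.Perm.decomposeFin.symm ((0 : Fin (N+1)), e)) 0 = k).card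
          = 0 := by
        simp only [mp_decomposeFin_zero]
        rw [Finset.card_eq_zero, Finset.filter_eq_empty_iff]
        intro e _
        omega
      have hN : 1 ≤ N := by omega
      have hq : ∀ q : Fin N, (Finset.univ.filter fun e : Equiv.Perm (Fin N) =>
          minimalPeriod ⇑(Equiv.Perm.decomposeFin.symm (q.succ, e)) 0 = k).card
          = (N - 1).factorial := by
        intro q
        simp only [mp_decomposeFin_succ]
        have heq : (Finset.univ.filter fun e : Equiv.Perm (Fin N) =>
            minimalPeriod ⇑e q + 1 = k)
            = (Finset.univ.filter fun e : Equiv.Perm (Fin N) =>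
            minimalPeriod ⇑e q = k - 1) := by
          refine Finset.filter_congr fun e _ => ?_
          constructor <;> (intro h; omega)
        rw [heq, ih (k-1) (by omega) (by omega) q]
      simp only [hq, h0, Finset.sum_const, Finset.card_univ, Fintype.card_fin, smul_eq_mul]
      rw [Nat.mul_factorial_pred (by omega)]
      simp

private lemma count_exists (n k : ℕ) (hk1 : 1 ≤ k) (hkn : k ≤ n) (h2 : n < 2 * k) :
    k * (Finset.univ.filter
        fun σ : Equiv.Perm (Fin n) => ∃ x, minimalPeriod ⇑σ x = k).card
      = n.factorial := by
  have hn : 1 ≤ n := le_trans hk1 hkn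
  have hmain : ∀ σ : Equiv.Perm (Fin n),
      (Finset.univ.filter fun x => minimalPeriod ⇑σ x = k).card
        = if (∃ x, minimalPeriod ⇑σ x = k) then k else 0 := by
    intro σ
    split_ifs with h
    · obtain ⟨x, hx⟩ := h
      exact filter_point_card σ h2 x hx
    · rw [Finset.card_eq_zero, Finset.filter_eq_empty_iff]
      exact fun x _ hx => h ⟨x, hx⟩
  calc k * (Finset.univ.filter
        fun σ : Equiv.Perm (Fin n) => ∃ x, minimalPeriod ⇑σ x = k).card
      = ∑ σ : Equiv.Perm (Fin n), if (∃ x, minimalPeriod ⇑σ x = k) then k else 0 := by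
        rw [← Finset.sum_filter, Finset.sum_const, smul_eq_mul, mul_comm]
    _ = ∑ σ : Equiv.Perm (Fin n),
          (Finset.univ.filter fun x => minimalPeriod ⇑σ x = k).card := by
        refine Finset.sum_congr rfl fun σ _ => (hmain σ).symm
    _ = ∑ σ : Equiv.Perm (Fin n), ∑ x : Fin n,
          if minimalPeriod ⇑σ x = k then 1 else 0 := by
        refine Finset.sum_congr rfl fun σ _ => ?_
        rw [Finset.card_filter]
    _ = ∑ x : Fin n, ∑ σ : Equiv.Perm (Fin n),
          if minimalPeriod ⇑σ x = k then 1 else 0 := Finset.sum_comm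
    _ = ∑ x : Fin n,
          (Finset.univ.filter fun σ : Equiv.Perm (Fin n) =>
            minimalPeriod ⇑σ x = k).card := by
        refine Finset.sum_congr rfl fun x _ => (Finset.card_filter _ _).symm
    _ = ∑ _x : Fin n, (n-1).factorial := by
        refine Finset.sum_congr rfl fun x _ => count_mp n k hk1 hkn x
    _ = n.factorial := by
        rw [Finset.sum_const, Finset.card_univ, Fintype.card_fin, smul_eq_mul,
          Nat.mul_factorial_pred (by omega)]

end Aux2
section Aux3
open Equiv Function

private lemma cycleCount_eq_zero_iff {n : ℕ} (σ : Equiv.Perm (Fin n)) {j : ℕ} (hj : 1 ≤ j) :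
    cycleCount σ j = 0 ↔ ¬ ∃ x : Fin n, minimalPeriod ⇑σ x = j := by
  unfold cycleCount
  constructor
  · rintro h ⟨x, hx⟩
    have hsub := orbitF_subset_filter σ x hx
    have hle : j ≤ (Finset.univ.filter fun y => minimalPeriod ⇑σ y = j).card :=
      calc j = (orbitF σ x).card := by rw [orbitF_card, hx]
        _ ≤ _ := Finset.card_le_card hsub
    have h1 : 1 ≤ (Finset.univ.filter fun y => minimalPeriod ⇑σ y = j).card / j :=
      (Nat.one_le_div_iff (by omega)).2 hle
    omega
  · intro h
    have he : (Finset.univ.filter fun x : Fin n => minimalPeriod ⇑σ x = j) = ∅ :=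
      Finset.filter_eq_empty_iff.2 fun x _ hx => h ⟨x, hx⟩
    rw [he]
    simp

end Aux3

/-- For `n/2 ≤ m ≤ n`, the probability that a random `σ ∈ Sₙ` has no cycle of
length greater than `m` equals `1 - Σ_{k=m+1}^n 1/k`. -/
theorem nu_large_m (n m : ℕ) (h2 : (n : ℝ) / 2 ≤ m) (hmn : m ≤ n) :
    permP n (fun σ => cycleCountIn σ (Finset.Icc (m + 1) n) = 0)
      = 1 - ∑ k ∈ Finset.Icc (m + 1) n, (1 : ℝ) / k := by
  have hn2m : n ≤ 2 * m := by
    have h : (n : ℝ) ≤ 2 * m := by linarith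
    exact_mod_cast h
  set I : Finset ℕ := Finset.Icc (m + 1) n with hI
  have hkI : ∀ k ∈ I, m + 1 ≤ k ∧ k ≤ n := fun k hk => Finset.mem_Icc.1 hk
  have hchar : ∀ σ : Equiv.Perm (Fin n),
      cycleCountIn σ I = 0 ↔
        ∀ k ∈ I, ¬ ∃ x : Fin n, Function.minimalPeriod ⇑σ x = k := by
    intro σ
    rw [cycleCountIn, Finset.sum_eq_zero_iff]
    refine forall_congr' fun k => ?_
    constructor
    · intro h hk
      exact (cycleCount_eq_zero_iff σ (by have := hkI k hk; omega)).1 (h hk)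
    · intro h hk
      exact (cycleCount_eq_zero_iff σ (by have := hkI k hk; omega)).2 (h hk)
  set A : ℕ → Finset (Equiv.Perm (Fin n)) := fun k =>
    Finset.univ.filter fun σ => ∃ x : Fin n, Function.minimalPeriod ⇑σ x = k with hA
  have hAk : ∀ k ∈ I, k * (A k).card = n.factorial := by
    intro k hk
    have h := hkI k hk
    exact count_exists n k (by omega) h.2 (by omega)
  have hbad : (Finset.univ.filter fun σ : Equiv.Perm (Fin n) =>
      ¬ cycleCountIn σ I = 0) = I.biUnion A := by
    ext σ
    simp only [Finset.mem_filter, Finset.mem_univ, true_and, Finset.mem_biUnion, hA]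
    rw [hchar σ]
    push_neg
    simp
  have hdisj : ∀ k ∈ I, ∀ k' ∈ I, k ≠ k' → Disjoint (A k) (A k') := by
    intro k hk k' hk' hne
    rw [Finset.disjoint_left]
    intro σ hσ hσ'
    obtain ⟨x, hx⟩ := (Finset.mem_filter.1 hσ).2
    obtain ⟨y, hy⟩ := (Finset.mem_filter.1 hσ').2
    have horb : Disjoint (orbitF σ x) (orbitF σ y) := by
      rw [Finset.disjoint_left]
      intro z hz1 hz2
      have h1 := orbitF_mp hz1
      have h2 := orbitF_mp hz2
      rw [hx] at h1; rw [hy] at h2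
      exact hne (h1 ▸ h2 ▸ rfl)
    have hcu : (orbitF σ x ∪ orbitF σ y).card = k + k' := by
      rw [Finset.card_union_of_disjoint horb, orbitF_card, orbitF_card, hx, hy]
    have hle : (orbitF σ x ∪ orbitF σ y).card ≤ n := by
      have := Finset.card_le_card (Finset.subset_univ (orbitF σ x ∪ orbitF σ y))
      simpa using this
    have h := hkI k hk
    have h' := hkI k' hk'
    omega
  have hsplit : (Finset.univ.filter fun σ : Equiv.Perm (Fin n) =>
        cycleCountIn σ I = 0).card + ∑ k ∈ I, (A k).card = n.factorial := by
    rw [← Finset.card_biUnion hdisj, ← hbad,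
      Finset.card_filter_add_card_filter_not, Finset.card_univ, Fintype.card_perm,
      Fintype.card_fin]
  have hfac : (0:ℝ) < n.factorial := by exact_mod_cast n.factorial_pos
  have hsumA : ∀ k ∈ I, ((A k).card : ℝ) = (n.factorial : ℝ) / k := by
    intro k hk
    have h := hkI k hk
    have hk0 : (k:ℝ) ≠ 0 := by
      have hp : 0 < k := by omega
      exact_mod_cast hp.ne'
    rw [eq_div_iff hk0]
    have hc : ((k * (A k).card : ℕ) : ℝ) = ((n.factorial : ℕ) : ℝ) := by
      exact_mod_cast congrArg (Nat.cast : ℕ → ℝ) (hAk k hk)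
    push_cast at hc
    linarith
  have hcast : ((Finset.univ.filter fun σ : Equiv.Perm (Fin n) =>
      cycleCountIn σ I = 0).card : ℝ)
      = (n.factorial : ℝ) - ∑ k ∈ I, ((A k).card : ℝ) := by
    have hc : (((Finset.univ.filter fun σ : Equiv.Perm (Fin n) =>
        cycleCountIn σ I = 0).card + ∑ k ∈ I, (A k).card : ℕ) : ℝ)
        = ((n.factorial : ℕ) : ℝ) := by
      exact_mod_cast congrArg (Nat.cast : ℕ → ℝ) hsplit
    push_cast at hc
    linarith
  unfold permP
  rw [Nat.card_eq_fintype_card, Fintype.card_subtype, hcast, sub_div, div_self hfac.ne',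
    Finset.sum_div]
  congr 1
  refine Finset.sum_congr rfl fun k hk => ?_
  have h := hkI k hk
  have hk0 : (k:ℝ) ≠ 0 := by
    have hp : 0 < k := by omega
    exact_mod_cast hp.ne'
  rw [hsumA k hk, div_right_comm, div_self hfac.ne']
end
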